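/- arXiv:2311.15039 — 8 statements merged into one kernel-verified Lean document; each statement's English description precedes it below -/
import Mathlib

section
/- Let G be a group generated by a finite set A, let π : (A ∪ A⁻¹)* → G be the canonical surjective monoid homomorphism from the free monoid over the alphabet consisting of the generators and their formal inverses, and let S ⊆ G be an algebraic subset of G. Then the subgroup ⟨S⟩ of G generated by S is also an algebraic subset of G. -/
open Pointwise

namespace CFAux

variable {T : Type} {N N' : Type}

/-- Map symbols by a terminal map and a nonterminal map. -/
def mSym (φ : T → T) (ρ : N → N') : Symbol T N → Symbol T N'
  | .terminal t => .terminal (φ t)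
  | .nonterminal n => .nonterminal (ρ n)

lemma mSym_injective {φ : T → T} {ρ : N → N'} (hφ : Function.Injective φ)
    (hρ : Function.Injective ρ) : Function.Injective (mSym φ ρ) := by
  intro a b h
  cases a <;> cases b <;> simp [mSym] at h
  · simp [hφ h]
  · simp [hρ h]

/-- Map a rule by a terminal map and a nonterminal map. -/
def mRule (φ : T → T) (ρ : N → N') (r : ContextFreeRule T N) : ContextFreeRule T N' :=
  ⟨ρ r.input, r.output.map (mSym φ ρ)⟩

lemma mRule_injective {φ : T → T} {ρ : N → N'} (hφ : Function.Injective φ)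
    (hρ : Function.Injective ρ) : Function.Injective (mRule φ ρ) := by
  intro a b h
  obtain ⟨h1, h2⟩ := ContextFreeRule.ext_iff.mp h
  exact ContextFreeRule.ext (hρ h1) (List.map_injective_iff.mpr (mSym_injective hφ hρ) h2)

lemma mRule_rewrites {φ : T → T} {ρ : N → N'} {r : ContextFreeRule T N}
    {u v : List (Symbol T N)} (h : r.Rewrites u v) :
    (mRule φ ρ r).Rewrites (u.map (mSym φ ρ)) (v.map (mSym φ ρ)) := by
  obtain ⟨p, q, rfl, rfl⟩ := h.exists_parts
  simpa [mRule, mSym] using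
    ContextFreeRule.rewrites_of_exists_parts (mRule φ ρ r) (p.map (mSym φ ρ)) (q.map (mSym φ ρ))

lemma lift_derives {g g' : ContextFreeGrammar T} (φ : T → T) (ρ : g.NT → g'.NT)
    (hsub : ∀ r ∈ g.rules, mRule φ ρ r ∈ g'.rules) {u v : List (Symbol T g.NT)}
    (h : g.Derives u v) :
    g'.Derives (u.map (mSym φ ρ)) (v.map (mSym φ ρ)) := by
  induction h with
  | refl => rfl
  | tail _ step ih =>
    obtain ⟨r, hr, hrw⟩ := step
    exact ih.trans_produces ⟨_, hsub r hr, mRule_rewrites hrw⟩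

/-- Relabeling of terminals in a grammar. -/
def mapTer (φ : T → T) (hφ : Function.Injective φ) (g : ContextFreeGrammar T) :
    ContextFreeGrammar T :=
  ⟨g.NT, g.initial, g.rules.map ⟨mRule φ id, mRule_injective hφ Function.injective_id⟩⟩

lemma mRule_invol {φ : T → T} (hφ : Function.Involutive φ) (r : ContextFreeRule T N) :
    mRule φ id (mRule φ id r) = r := by
  refine ContextFreeRule.ext rfl ?_
  show (r.output.map (mSym φ id)).map (mSym φ id) = r.output
  rw [List.map_map]
  have hcomp : mSym (N := N) φ id ∘ mSym φ id = id := by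
    funext x; cases x <;> simp [mSym, hφ _]
  simp [hcomp]

lemma mapTer_derives_back {φ : T → T} (hφ : Function.Involutive φ) (g : ContextFreeGrammar T)
    {u v : List (Symbol T (mapTer φ hφ.injective g).NT)}
    (h : (mapTer φ hφ.injective g).Derives u v) :
    g.Derives (u.map (mSym φ id)) (v.map (mSym φ id)) := by
  induction h with
  | refl => rfl
  | tail _ step ih =>
    obtain ⟨r', hr', hrw⟩ := step
    replace hr' := (Finset.mem_map (f := ⟨mRule φ id, mRule_injective hφ.injective Function.injective_id⟩) (s := g.rules) (b := r')).mp hr'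
    obtain ⟨r, hr, hEr⟩ := hr'
    subst hEr
    have hrw2 := mRule_rewrites (φ := φ) (ρ := (id : g.NT → g.NT))
      (show (mRule φ id r).Rewrites _ _ from hrw)
    rw [mRule_invol hφ] at hrw2
    exact ih.trans_produces ⟨r, hr, hrw2⟩


section Eval

variable {G : Type} [Monoid G] (f0 : T → G)

/-- Evaluate a symbol as a set of monoid elements, given values for nonterminals. -/
def symE (ν : N → Set G) : Symbol T N → Set G
  | .terminal t => {f0 t}
  | .nonterminal n => ν n

/-- Evaluate a sentential form as a set of monoid elements (pointwise product). -/
def strE (ν : N → Set G) (s : List (Symbol T N)) : Set G :=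
  (s.map (symE f0 ν)).prod

lemma strE_append (ν : N → Set G) (u v : List (Symbol T N)) :
    strE f0 ν (u ++ v) = strE f0 ν u * strE f0 ν v := by
  simp [strE]

lemma strE_nil (ν : N → Set G) : strE f0 ν ([] : List (Symbol T N)) = 1 := rfl

lemma strE_singleton (ν : N → Set G) (a : Symbol T N) :
    strE f0 ν [a] = symE f0 ν a := by
  simp [strE]

lemma strE_terminal (ν : N → Set G) (w : List T) :
    strE f0 ν (w.map Symbol.terminal) = {(w.map f0).prod} := by
  induction w with
  | nil => simp [strE]; rfl
  | cons t w ih =>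
    rw [List.map_cons, show (Symbol.terminal t :: w.map Symbol.terminal : List (Symbol T N))
      = [Symbol.terminal t] ++ w.map Symbol.terminal from rfl, strE_append, ih,
      strE_singleton]
    simp [symE, Set.singleton_mul_singleton]

lemma strE_sound {g : ContextFreeGrammar T} {ν : g.NT → Set G}
    (hr : ∀ r ∈ g.rules, strE f0 ν r.output ⊆ ν r.input)
    {u v : List (Symbol T g.NT)} (h : g.Derives u v) :
    strE f0 ν v ⊆ strE f0 ν u := by
  induction h with
  | refl => exact subset_rfl
  | tail _ step ih =>
    obtain ⟨r, hrm, hrw⟩ := step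
    obtain ⟨p, q, h1, h2⟩ := hrw.exists_parts
    refine subset_trans ?_ ih
    rw [h1, h2, strE_append, strE_append, strE_append, strE_append, strE_singleton]
    exact Set.mul_subset_mul (Set.mul_subset_mul subset_rfl (hr r hrm)) subset_rfl

lemma strE_map_id {N' : Type} (ν : N' → Set G) (ρ : N → N') (s : List (Symbol T N)) :
    strE f0 ν (s.map (mSym id ρ)) = strE f0 (fun n => ν (ρ n)) s := by
  unfold strE
  rw [List.map_map]
  congr 1
  apply List.map_congr_left
  intro x _
  cases x <;> rfl

lemma map_mSym_id_terminal {N' : Type} (ρ : N → N') (u : List T) :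
    (u.map Symbol.terminal).map (mSym id ρ) = u.map Symbol.terminal := by
  rw [List.map_map]
  apply List.map_congr_left
  intro x _
  rfl

/-- The set of words derivable from a nonterminal. -/
def Dset (g : ContextFreeGrammar T) (n : g.NT) : Set (List T) :=
  {w | g.Derives [Symbol.nonterminal n] (w.map Symbol.terminal)}

lemma strE_witness (g : ContextFreeGrammar T) (s : List (Symbol T g.NT)) :
    strE f0 (fun n => (fun w => (w.map f0).prod) '' Dset g n) s ⊆
      {x | ∃ w : List T, g.Derives s (w.map Symbol.terminal) ∧ (w.map f0).prod = x} := by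
  induction s with
  | nil =>
    intro x hx
    rw [strE_nil] at hx
    exact ⟨[], by simp; rfl, by simpa using hx.symm⟩
  | cons a s ih =>
    intro x hx
    rw [show (a :: s) = [a] ++ s from rfl, strE_append] at hx
    rw [Set.mem_mul] at hx
    obtain ⟨y, hy, z, hz, rfl⟩ := hx
    obtain ⟨w2, hd2, hp2⟩ := ih hz
    rw [strE_singleton] at hy
    cases a with
    | terminal t =>
      rw [show symE f0 (fun n => (fun w => (w.map f0).prod) '' Dset g n) (Symbol.terminal t)
        = {f0 t} from rfl, Set.mem_singleton_iff] at hy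
      refine ⟨t :: w2, ?_, ?_⟩
      · rw [List.map_cons]
        exact hd2.append_left [Symbol.terminal t]
      · simp [hy, hp2]
    | nonterminal n =>
      obtain ⟨w1, hw1, rfl⟩ := hy
      refine ⟨w1 ++ w2, ?_, ?_⟩
      · have d1 : g.Derives ([Symbol.nonterminal n] ++ s) (w1.map Symbol.terminal ++ s) :=
          (hw1 : g.Derives _ _).append_right s
        have d2 : g.Derives (w1.map Symbol.terminal ++ s)
            (w1.map Symbol.terminal ++ w2.map Symbol.terminal) :=
          hd2.append_left _
        simpa [List.map_append] using d1.trans d2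
      · simp [hp2]

end Eval

end CFAux


/-- The canonical monoid homomorphism `π` from the free monoid over the alphabet
`X ⊕ X` (generators and their formal inverses) to a group `G`, induced by `f : X → G`:
a left letter `Sum.inl x` is sent to `f x` and a right (formal inverse) letter
`Sum.inr x` is sent to `(f x)⁻¹`. -/
def wordHom {X G : Type} [Group G] (f : X → G) : FreeMonoid (X ⊕ X) →* G :=
  FreeMonoid.lift (Sum.elim f fun x => (f x)⁻¹)

/-- A subset `S ⊆ G` is algebraic (with respect to the generating map `f : X → G`)
if it is the image under the canonical homomorphism of a context-free language
over the alphabet of generators and formal inverses. -/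
def IsAlgebraicSubset {X G : Type} [Group G] (f : X → G) (S : Set G) : Prop :=
  ∃ L : Language (X ⊕ X), L.IsContextFree ∧
    (fun w : List (X ⊕ X) => wordHom f (FreeMonoid.ofList w)) '' L = S

namespace CFAux

variable {X G : Type} [Group G]

lemma wordHom_eq_prod (f : X → G) (w : List (X ⊕ X)) :
    wordHom f (FreeMonoid.ofList w) = (w.map (Sum.elim f fun x => (f x)⁻¹)).prod := by
  simp [wordHom, FreeMonoid.lift_ofList]

lemma prod_inv_word (f : X → G) (u : List (X ⊕ X)) :
    (((u.map Sum.swap).reverse).map (Sum.elim f fun x => (f x)⁻¹)).prod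
      = ((u.map (Sum.elim f fun x => (f x)⁻¹)).prod)⁻¹ := by
  induction u with
  | nil => simp
  | cons a u ih =>
    have ha : Sum.elim f (fun x => (f x)⁻¹) (Sum.swap a)
        = (Sum.elim f (fun x => (f x)⁻¹) a)⁻¹ := by
      cases a <;> simp
    calc ((( a :: u).map Sum.swap).reverse.map (Sum.elim f fun x => (f x)⁻¹)).prod
        = (((u.map Sum.swap).reverse ++ [Sum.swap a]).map (Sum.elim f fun x => (f x)⁻¹)).prod := by
          simp
      _ = (((u.map Sum.swap).reverse).map (Sum.elim f fun x => (f x)⁻¹)).prod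
            * Sum.elim f (fun x => (f x)⁻¹) (Sum.swap a) := by
          rw [List.map_append, List.prod_append]; simp
      _ = ((u.map (Sum.elim f fun x => (f x)⁻¹)).prod)⁻¹ * (Sum.elim f (fun x => (f x)⁻¹) a)⁻¹ := by
          rw [ih, ha]
      _ = (((a :: u).map (Sum.elim f fun x => (f x)⁻¹)).prod)⁻¹ := by
          rw [List.map_cons, List.prod_cons, mul_inv_rev]

end CFAux

/-- If `S` is an algebraic subset of a group `G` generated by a finite set,
then the subgroup generated by `S` is also algebraic. -/
theorem subgroup_closure_isAlgebraic {X G : Type} [Fintype X] [Group G] (f : X → G)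
    (hgen : Subgroup.closure (Set.range f) = ⊤)
    (S : Set G) (hS : IsAlgebraicSubset f S) :
    IsAlgebraicSubset f ((Subgroup.closure S : Subgroup G) : Set G) := by
  classical
  open CFAux in
  obtain ⟨L, ⟨g, rfl⟩, hImg⟩ := hS
  set f0 : X ⊕ X → G := Sum.elim f fun x => (f x)⁻¹ with hf0
  set F : List (X ⊕ X) → G := fun w => wordHom f (FreeMonoid.ofList w) with hF
  have hFp : ∀ w : List (X ⊕ X), F w = (w.map f0).prod := fun w => wordHom_eq_prod f w
  set φ : X ⊕ X → X ⊕ X := Sum.swap with hφdef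
  have hφ : Function.Involutive φ := Sum.swap_swap
  set g₂ : ContextFreeGrammar (X ⊕ X) := (mapTer φ hφ.injective g).reverse with hg₂
  -- the new grammar
  let N' : Type := Option (g.NT ⊕ g.NT)
  let e₁ : g.NT → N' := fun n => some (Sum.inl n)
  let e₂ : g₂.NT → N' := fun n => some (Sum.inr n)
  have he₁ : Function.Injective e₁ := fun a b h => by
    have := Option.some_injective _ h
    exact Sum.inl_injective this
  have he₂ : Function.Injective e₂ := fun a b h => by
    have := Option.some_injective _ h
    exact Sum.inr_injective this
  let r0 : ContextFreeRule (X ⊕ X) N' := ⟨none, []⟩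
  let r1 : ContextFreeRule (X ⊕ X) N' :=
    ⟨none, [Symbol.nonterminal (e₁ g.initial), Symbol.nonterminal none]⟩
  let r2 : ContextFreeRule (X ⊕ X) N' :=
    ⟨none, [Symbol.nonterminal (e₂ g₂.initial), Symbol.nonterminal none]⟩
  let g' : ContextFreeGrammar (X ⊕ X) :=
    ⟨N', none,
      (g.rules.map ⟨mRule id e₁, mRule_injective Function.injective_id he₁⟩ ∪
        g₂.rules.map ⟨mRule id e₂, mRule_injective Function.injective_id he₂⟩) ∪
      {r0, r1, r2}⟩
  have hsub₁ : ∀ r ∈ g.rules, mRule id e₁ r ∈ g'.rules := fun r hr =>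
    Finset.mem_union_left _ (Finset.mem_union_left _ (Finset.mem_map_of_mem _ hr))
  have hsub₂ : ∀ r ∈ g₂.rules, mRule id e₂ r ∈ g'.rules := fun r hr =>
    Finset.mem_union_left _ (Finset.mem_union_right _ (Finset.mem_map_of_mem _ hr))
  have hr0 : r0 ∈ g'.rules := Finset.mem_union_right _ (Finset.mem_insert_self _ _)
  have hr1 : r1 ∈ g'.rules := Finset.mem_union_right _
    (Finset.mem_insert_of_mem (Finset.mem_insert_self _ _))
  have hr2 : r2 ∈ g'.rules := Finset.mem_union_right _
    (Finset.mem_insert_of_mem (Finset.mem_insert_of_mem (Finset.mem_singleton_self _)))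
  have hsubT : ∀ r ∈ g.rules, mRule φ id r ∈ (mapTer φ hφ.injective g).rules := fun r hr =>
    Finset.mem_map_of_mem _ hr
  -- words of `g` give rise to "inverse words" of `g₂`
  have hg2mem : ∀ u ∈ g.language, (u.map φ).reverse ∈ g₂.language := by
    intro u hu
    have hd := lift_derives (g := g) (g' := mapTer φ hφ.injective g) φ id hsubT hu
    have h1 : ([Symbol.nonterminal g.initial] : List (Symbol (X ⊕ X) g.NT)).map (mSym φ id)
        = [Symbol.nonterminal g.initial] := rfl
    have h2 : (u.map Symbol.terminal : List (Symbol (X ⊕ X) g.NT)).map (mSym φ id)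
        = (u.map φ).map Symbol.terminal := by
      rw [List.map_map, List.map_map]; rfl
    erw [h1, h2] at hd
    have hmem : (u.map φ) ∈ (mapTer φ hφ.injective g).language := hd
    rw [hg₂, ContextFreeGrammar.language_reverse]
    simpa using hmem
  -- words of `g₂` are inverse words of `g`
  have hg2mem' : ∀ w ∈ g₂.language, w.reverse.map φ ∈ g.language := by
    intro w hw
    rw [hg₂, ContextFreeGrammar.language_reverse] at hw
    have hw' : w.reverse ∈ (mapTer φ hφ.injective g).language := hw
    have hd := mapTer_derives_back hφ g hw'
    have h1 : ([Symbol.nonterminal (mapTer φ hφ.injective g).initial] :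
        List (Symbol (X ⊕ X) (mapTer φ hφ.injective g).NT)).map (mSym φ id)
        = [Symbol.nonterminal g.initial] := rfl
    have h2 : (w.reverse.map Symbol.terminal : List (Symbol (X ⊕ X) g.NT)).map (mSym φ id)
        = (w.reverse.map φ).map Symbol.terminal := by
      rw [List.map_map, List.map_map]; rfl
    erw [h1, h2] at hd
    exact hd
  have hw_eq : ∀ w : List (X ⊕ X), ((w.reverse.map φ).map φ).reverse = w := by
    intro w
    rw [List.map_map, hφ.comp_self, List.map_id, List.reverse_reverse]
  -- evaluation of words in G
  set h : List (X ⊕ X) → G := fun w => (w.map f0).prod with hh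
  have hFh : ∀ w, F w = h w := hFp
  -- values of words of g₂ lie in S⁻¹
  have himg2 : ∀ w ∈ g₂.language, (h w)⁻¹ ∈ S := by
    intro w hw
    have hu : w.reverse.map φ ∈ g.language := hg2mem' w hw
    have hS' : F (w.reverse.map φ) ∈ S := hImg ▸ Set.mem_image_of_mem _ hu
    have hinv : h (((w.reverse.map φ).map φ).reverse) = (h (w.reverse.map φ))⁻¹ :=
      prod_inv_word f (w.reverse.map φ)
    rw [hw_eq w] at hinv
    rw [hinv, inv_inv, ← hFh]
    exact hS'
  -- the interpretation of nonterminals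
  let ν : N' → Set G := fun n => match n with
    | none => (Subgroup.closure S : Set G)
    | some (Sum.inl m) => h '' Dset g m
    | some (Sum.inr m) => h '' Dset g₂ m
  -- rule soundness
  have hRules : ∀ r ∈ g'.rules, strE f0 ν r.output ⊆ ν r.input := by
    intro r hr
    rcases Finset.mem_union.mp hr with hA | hB
    · rcases Finset.mem_union.mp hA with h1 | h2
      · obtain ⟨r₀, hr₀, rfl⟩ := Finset.mem_map.mp h1
        show strE f0 ν (r₀.output.map (mSym id e₁)) ⊆ ν (e₁ r₀.input)
        rw [strE_map_id]
        refine subset_trans (strE_witness f0 g r₀.output) ?_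
        rintro x ⟨w, hdw, rfl⟩
        exact ⟨w, (ContextFreeGrammar.Produces.single
          ⟨r₀, hr₀, ContextFreeRule.Rewrites.input_output⟩).trans hdw, rfl⟩
      · obtain ⟨r₀, hr₀, rfl⟩ := Finset.mem_map.mp h2
        show strE f0 ν (r₀.output.map (mSym id e₂)) ⊆ ν (e₂ r₀.input)
        rw [strE_map_id]
        refine subset_trans (strE_witness f0 g₂ r₀.output) ?_
        rintro x ⟨w, hdw, rfl⟩
        exact ⟨w, (ContextFreeGrammar.Produces.single
          ⟨r₀, hr₀, ContextFreeRule.Rewrites.input_output⟩).trans hdw, rfl⟩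
    · have hin : ∀ (A : N') (hA : strE f0 ν [Symbol.nonterminal A] ⊆ (Subgroup.closure S : Set G)),
          strE f0 ν [Symbol.nonterminal A, Symbol.nonterminal none]
            ⊆ (Subgroup.closure S : Set G) := by
        intro A hAs x hx
        rw [show ([Symbol.nonterminal A, Symbol.nonterminal none] : List (Symbol (X ⊕ X) N'))
          = [Symbol.nonterminal A] ++ [Symbol.nonterminal none] from rfl, strE_append,
          Set.mem_mul] at hx
        obtain ⟨y, hy, z, hz, rfl⟩ := hx
        have hy' : y ∈ (Subgroup.closure S : Set G) := hAs hy
        have hz' : z ∈ (Subgroup.closure S : Set G) := by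
          rw [strE_singleton] at hz
          exact hz
        exact mul_mem hy' hz'
      rcases Finset.mem_insert.mp hB with rfl | hB'
      · intro x hx
        rw [show (r0.output : List (Symbol (X ⊕ X) N')) = [] from rfl, strE_nil,
          Set.mem_one] at hx
        subst hx
        exact one_mem _
      rcases Finset.mem_insert.mp hB' with rfl | hB''
      · refine hin (e₁ g.initial) ?_
        rw [strE_singleton]
        rintro y ⟨w, hw, rfl⟩
        have : F w ∈ S := hImg ▸ Set.mem_image_of_mem _ (hw : w ∈ g.language)
        rw [hFh] at this
        exact Subgroup.subset_closure this
      rw [Finset.mem_singleton] at hB''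
      subst hB''
      refine hin (e₂ g₂.initial) ?_
      rw [strE_singleton]
      rintro y ⟨w, hw, rfl⟩
      have : (h w)⁻¹ ∈ S := himg2 w (hw : w ∈ g₂.language)
      have := inv_mem (Subgroup.subset_closure this)
      rwa [inv_inv] at this
  refine ⟨g'.language, ⟨g', rfl⟩, Set.Subset.antisymm ?_ ?_⟩
  · -- hard direction
    rintro x ⟨w, hw, rfl⟩
    have hsound := strE_sound f0 hRules (hw : g'.Derives _ _)
    have hmem : h w ∈ strE f0 ν [Symbol.nonterminal g'.initial] := by
      apply hsound
      rw [strE_terminal]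
      exact rfl
    rw [strE_singleton] at hmem
    have hgoal : F w ∈ (Subgroup.closure S : Set G) := by rw [hFh w]; exact hmem
    exact hgoal
  · -- easy direction
    intro x hx
    have hx' : x ∈ Submonoid.closure (S ∪ S⁻¹) := by
      rw [← Subgroup.closure_toSubmonoid]
      exact hx
    obtain ⟨l, hl, rfl⟩ := Submonoid.exists_list_of_mem_closure hx'
    have key : ∀ y ∈ S ∪ S⁻¹, ∃ (A : N') (w1 : List (X ⊕ X)),
        g'.Produces [Symbol.nonterminal none]
          ([Symbol.nonterminal A] ++ [Symbol.nonterminal none]) ∧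
        g'.Derives [Symbol.nonterminal A] (w1.map Symbol.terminal) ∧ h w1 = y := by
      intro y hy
      rcases hy with hy | hy
      · rw [← hImg] at hy
        obtain ⟨u, hu, hyu⟩ := hy
        refine ⟨e₁ g.initial, u, ⟨r1, hr1, ContextFreeRule.Rewrites.input_output⟩, ?_, ?_⟩
        · have hd := lift_derives (g' := g') id e₁ hsub₁ (hu : g.Derives _ _)
          rw [map_mSym_id_terminal] at hd
          exact hd
        · rw [← hFh]
          exact hyu
      · rw [Set.mem_inv, ← hImg] at hy
        obtain ⟨u, hu, hyu⟩ := hy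
        refine ⟨e₂ g₂.initial, (u.map φ).reverse,
          ⟨r2, hr2, ContextFreeRule.Rewrites.input_output⟩, ?_, ?_⟩
        · have hmem2 : (u.map φ).reverse ∈ g₂.language := hg2mem u hu
          have hd := lift_derives (g' := g') id e₂ hsub₂ (hmem2 : g₂.Derives _ _)
          rw [map_mSym_id_terminal] at hd
          exact hd
        · have : h ((u.map φ).reverse) = (h u)⁻¹ := prod_inv_word f u
          rw [this, ← hFh, hyu, inv_inv]
    have main : ∀ l' : List G, (∀ y ∈ l', y ∈ S ∪ S⁻¹) →
        ∃ w : List (X ⊕ X), g'.Derives [Symbol.nonterminal none] (w.map Symbol.terminal)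
          ∧ h w = l'.prod := by
      intro l' hl'
      induction l' with
      | nil =>
        refine ⟨[], ?_, rfl⟩
        exact ContextFreeGrammar.Produces.single ⟨r0, hr0, ContextFreeRule.Rewrites.input_output⟩
      | cons y l' ih =>
        obtain ⟨w2, hd2, hp2⟩ := ih (fun z hz => hl' z (List.mem_cons_of_mem _ hz))
        obtain ⟨A, w1, hstep, hd1, hp1⟩ := key y (hl' y List.mem_cons_self)
        refine ⟨w1 ++ w2, ?_, ?_⟩
        · have s2 : g'.Derives ([Symbol.nonterminal A] ++ [Symbol.nonterminal none])
              (w1.map Symbol.terminal ++ [Symbol.nonterminal none]) :=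
            hd1.append_right _
          have s3 : g'.Derives (w1.map Symbol.terminal ++ [Symbol.nonterminal none])
              (w1.map Symbol.terminal ++ w2.map Symbol.terminal) :=
            hd2.append_left _
          rw [List.map_append]
          exact hstep.trans_derives (s2.trans s3)
        · have hsplit : h (w1 ++ w2) = h w1 * h w2 := by
            simp only [hh, List.map_append, List.prod_append]
          rw [List.prod_cons, ← hp1, ← hp2]
          exact hsplit
    obtain ⟨w, hd, hp⟩ := main l hl
    refine ⟨w, hd, ?_⟩
    show F w = l.prod
    rw [hFh w]
    exact hp
end

section
/- Let G be a group generated by a finite set A, let π : (A ∪ A⁻¹)* → G be the canonical surjective monoid homomorphism, and let H be a subgroup of G. Then H is a rational subset of G if and only if H is finitely generated as a group. -/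
/-- A subset `K ⊆ G` is rational (with respect to the generating map `f : X → G`)
if it is the image under the canonical homomorphism of a regular language
over the alphabet of generators and formal inverses. -/
def IsRationalSubset {X G : Type} [Group G] (f : X → G) (K : Set G) : Prop :=
  ∃ L : Language (X ⊕ X), L.IsRegular ∧
    (fun w : List (X ⊕ X) => wordHom f (FreeMonoid.ofList w)) '' L = K

namespace AnSei


section helpers
variable {X G : Type} [Group G] (f : X → G)

def wordEval (f : X → G) (w : List (X ⊕ X)) : G := wordHom f (FreeMonoid.ofList w)

lemma wordEval_nil : wordEval f [] = 1 := map_one _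

lemma wordEval_append (x y : List (X ⊕ X)) :
    wordEval f (x ++ y) = wordEval f x * wordEval f y := map_mul _ _ _

lemma wordEval_singleton (a : X ⊕ X) :
    wordEval f [a] = Sum.elim f (fun x => (f x)⁻¹) a :=
  FreeMonoid.lift_eval_of _ _

lemma wordEval_cons (a : X ⊕ X) (w : List (X ⊕ X)) :
    wordEval f (a :: w) = wordEval f [a] * wordEval f w := by
  rw [← wordEval_append]; rfl

def winv (w : List (X ⊕ X)) : List (X ⊕ X) := (w.map Sum.swap).reverse

lemma wordEval_winv (w : List (X ⊕ X)) : wordEval f (winv w) = (wordEval f w)⁻¹ := by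
  induction w with
  | nil => simp [winv, wordEval_nil]
  | cons a w ih =>
    rw [wordEval_cons]
    simp only [winv, List.map_cons, List.reverse_cons]
    rw [wordEval_append]
    rw [show (w.map Sum.swap).reverse = winv w from rfl, ih]
    rcases a with x | x <;> simp [wordEval_singleton]

lemma exists_word (hgen : Subgroup.closure (Set.range f) = ⊤) (g : G) :
    ∃ w : List (X ⊕ X), wordEval f w = g := by
  have hg : g ∈ Subgroup.closure (Set.range f) := hgen ▸ Subgroup.mem_top g
  induction hg using Subgroup.closure_induction with
  | mem x hx =>
    obtain ⟨a, rfl⟩ := hx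
    exact ⟨[Sum.inl a], by simp [wordEval_singleton]⟩
  | one => exact ⟨[], wordEval_nil f⟩
  | mul x y _ _ ihx ihy =>
    obtain ⟨u, hu⟩ := ihx; obtain ⟨v, hv⟩ := ihy
    exact ⟨u ++ v, by rw [wordEval_append, hu, hv]⟩
  | inv x _ ih =>
    obtain ⟨u, hu⟩ := ih
    exact ⟨winv u, by rw [wordEval_winv, hu]⟩

lemma wordEval_flatten (l : List (List (X ⊕ X))) :
    wordEval f l.flatten = (l.map (wordEval f)).prod := by
  induction l with
  | nil => simp [wordEval_nil]
  | cons a l ih => simp [wordEval_append, ih]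

end helpers

variable {α σ : Type*}

def NPath (M : NFA α σ) : σ → List α → σ → Prop
  | q, [], q' => q = q'
  | q, a :: w, q' => ∃ r ∈ M.step q a, NPath M r w q'

lemma mem_evalFrom_iff (M : NFA α σ) (w : List α) (S : Set σ) (t : σ) :
    t ∈ M.evalFrom S w ↔ ∃ s ∈ S, NPath M s w t := by
  induction w generalizing S with
  | nil => simp [NPath, NFA.evalFrom, eq_comm]
  | cons a w ih =>
    have : M.evalFrom S (a :: w) = M.evalFrom (M.stepSet S a) w := rfl
    rw [this, ih]
    constructor
    · rintro ⟨r, hr, hp⟩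
      rw [NFA.mem_stepSet] at hr
      obtain ⟨s, hs, hstep⟩ := hr
      exact ⟨s, hs, r, hstep, hp⟩
    · rintro ⟨s, hs, r, hstep, hp⟩
      exact ⟨r, NFA.mem_stepSet.2 ⟨s, hs, hstep⟩, hp⟩

lemma NPath.trans {M : NFA α σ} {q r t : σ} {u v : List α}
    (h1 : NPath M q u r) (h2 : NPath M r v t) : NPath M q (u ++ v) t := by
  induction u generalizing q with
  | nil => cases h1; exact h2
  | cons a u ih =>
    obtain ⟨s, hs, hp⟩ := h1
    exact ⟨s, hs, ih hp⟩

section easy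

variable {X G : Type} [Group G] (f : X → G) (hgen : Subgroup.closure (Set.range f) = ⊤)

include hgen in
theorem isRational_of_fg (H : Subgroup G) (hfg : H.FG) :
    IsRationalSubset f (H : Set G) := by
  classical
  obtain ⟨Tset, hTclos, hTfin⟩ := (Subgroup.fg_iff H).1 hfg
  -- symmetric finite generating set containing 1
  set S : Set G := insert 1 (Tset ∪ Tset⁻¹) with hS
  have hSfin : S.Finite := (hTfin.union hTfin.inv).insert 1
  have hSsub : S ⊆ (H : Set G) := by
    intro x hx
    rcases hx with rfl | hx | hx
    · exact H.one_mem
    · exact hTclos ▸ Subgroup.subset_closure hx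
    · rw [Set.mem_inv] at hx
      have := hTclos ▸ Subgroup.subset_closure hx
      simpa using (Subgroup.inv_mem H this)
  have hSclos : Subgroup.closure S = H := by
    apply le_antisymm
    · rw [← hTclos] at hSsub ⊢
      exact (Subgroup.closure_le _).2 hSsub
    · rw [← hTclos]
      exact Subgroup.closure_mono (by intro x hx; exact Or.inr (Or.inl hx))
  have hSsymm : S ∪ S⁻¹ = S := by
    apply Set.union_eq_self_of_subset_right
    intro x hx
    rw [Set.mem_inv] at hx
    rcases hx with h1 | hx | hx
    · left; rw [← inv_inv x, h1]; simp
    · right; right; rw [Set.mem_inv]; simpa using hx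
    · right; left; simpa using hx
  -- choose word representatives
  have hex : ∀ g : G, ∃ w : List (X ⊕ X), wordEval f w = g := exists_word f hgen
  set rep : G → List (X ⊕ X) := fun g => Classical.choose (hex g) with hrepdef
  have hrep : ∀ g, wordEval f (rep g) = g := fun g => Classical.choose_spec (hex g)
  haveI : Fintype S := hSfin.fintype
  -- the NFA
  set σ := Σ s : S, Fin ((rep s.1).length + 1) with hσ
  set M : NFA (X ⊕ X) σ :=
    { step := fun p a => {p' | ∃ h : p.2.val < (rep p.1.1).length,
        (rep p.1.1).get ⟨p.2.val, h⟩ = a ∧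
        (p' = ⟨p.1, ⟨p.2.val + 1, by omega⟩⟩ ∨
          (p.2.val + 1 = (rep p.1.1).length ∧ p'.2.val = 0))},
      start := {p | p.2.val = 0},
      accept := {p | p.2.val = 0} } with hM
  -- soundness
  have sound : ∀ (w : List (X ⊕ X)) (p p' : σ), NPath M p w p' →
      ∃ h ∈ H, wordEval f ((rep p.1.1).take p.2.val) * wordEval f w
        = h * wordEval f ((rep p'.1.1).take p'.2.val) := by
    intro w
    induction w with
    | nil =>
      intro p p' hp
      cases hp
      exact ⟨1, H.one_mem, by rw [wordEval_nil, one_mul, mul_one]⟩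
    | cons a w ih =>
      rintro p p' ⟨r, ⟨hlt, hget, hr⟩, hpath⟩
      have key : wordEval f ((rep p.1.1).take p.2.val) * wordEval f [a]
          = wordEval f ((rep p.1.1).take (p.2.val + 1)) := by
        rw [← wordEval_append]
        congr 1
        rw [← hget]
        simpa [List.concat_eq_append] using List.take_concat_get (rep p.1.1) p.2.val hlt
      obtain ⟨h, hh, heq⟩ := ih r p' hpath
      rcases hr with rfl | ⟨hlen, hzero⟩
      · refine ⟨h, hh, ?_⟩
        rw [wordEval_cons, ← mul_assoc, key]
        exact heq
      · have hr0 : wordEval f ((rep r.1.1).take r.2.val) = 1 := by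
          rw [hzero]; simp [wordEval_nil]
        have hfull : wordEval f ((rep p.1.1).take (p.2.val + 1)) = p.1.1 := by
          rw [hlen, List.take_length, hrep]
        refine ⟨p.1.1 * h, H.mul_mem (hSsub p.1.2) hh, ?_⟩
        rw [wordEval_cons, ← mul_assoc, key, hfull]
        rw [hr0, one_mul] at heq
        rw [heq, mul_assoc]
  -- completeness: traverse one word
  have travel : ∀ (w : List (X ⊕ X)) (s : S) (i : ℕ) (hi : i + w.length = (rep s.1).length)
      (hw : w = (rep s.1).drop i) (t : σ), t.2.val = 0 → w ≠ [] →
      NPath M ⟨s, ⟨i, by omega⟩⟩ w t := by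
    intro w
    induction w with
    | nil => intro _ _ _ _ _ _ h; exact absurd rfl h
    | cons a w ih =>
      intro s i hi hw t ht _
      have hlt : i < (rep s.1).length := by simp at hi; omega
      have hdrop : (rep s.1).drop i = (rep s.1).get ⟨i, hlt⟩ :: (rep s.1).drop (i + 1) := by
        simpa using List.drop_eq_getElem_cons hlt
      rw [hdrop] at hw
      obtain ⟨ha, hw'⟩ := List.cons_eq_cons.1 hw
      rcases eq_or_ne w [] with rfl | hne
      · -- last letter
        have hlen : i + 1 = (rep s.1).length := by simpa using hi
        exact ⟨t, ⟨hlt, ha.symm, Or.inr ⟨hlen, ht⟩⟩, rfl⟩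
      · refine ⟨⟨s, ⟨i + 1, by omega⟩⟩, ⟨hlt, ha.symm, Or.inl rfl⟩, ?_⟩
        exact ih s (i + 1) (by simp at hi ⊢; omega) hw' t ht hne
  -- completeness: traverse a list of generator words
  have travelList : ∀ (l : List G), (∀ y ∈ l, y ∈ S) → ∀ t : σ, t.2.val = 0 →
      ∃ q0 : σ, q0.2.val = 0 ∧ NPath M q0 (l.map rep).flatten t := by
    intro l
    induction l with
    | nil => intro _ t ht; exact ⟨t, ht, rfl⟩
    | cons s l ih =>
      intro hl t ht
      obtain ⟨q1, hq1, hpath⟩ := ih (fun y hy => hl y (List.mem_cons_of_mem _ hy)) t ht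
      have hsS : s ∈ S := hl s List.mem_cons_self
      rcases eq_or_ne (rep s) [] with hnil | hne
      · refine ⟨q1, hq1, ?_⟩
        simpa [hnil] using hpath
      · refine ⟨⟨⟨s, hsS⟩, ⟨0, by omega⟩⟩, rfl, ?_⟩
        simp only [List.map_cons, List.flatten_cons]
        exact NPath.trans (travel (rep s) ⟨s, hsS⟩ 0 (by simp) (by simp) q1 hq1
          (fun h => hne h)) hpath
  -- the language
  refine ⟨M.toDFA.accepts, ⟨Set σ, by infer_instance, M.toDFA, rfl⟩, ?_⟩
  rw [NFA.toDFA_correct]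
  ext g
  constructor
  · rintro ⟨w, hw, rfl⟩
    replace hw := NFA.mem_accepts.1 hw
    obtain ⟨t, htacc, htev⟩ := hw
    rw [mem_evalFrom_iff] at htev
    obtain ⟨q0, hq0, hpath⟩ := htev
    obtain ⟨h, hh, heq⟩ := sound w q0 t hpath
    have h0 : wordEval f ((rep q0.1.1).take q0.2.val) = 1 := by
      have : q0.2.val = 0 := hq0
      rw [this]; simp [wordEval_nil]
    have h1 : wordEval f ((rep t.1.1).take t.2.val) = 1 := by
      have : t.2.val = 0 := htacc
      rw [this]; simp [wordEval_nil]
    rw [h0, h1, one_mul, mul_one] at heq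
    show wordEval f w ∈ (H : Set G)
    rw [heq]; exact hh
  · intro hg
    have hg' : g ∈ Submonoid.closure S := by
      have : g ∈ (Subgroup.closure S).toSubmonoid := by
        rw [hSclos]; exact hg
      rwa [Subgroup.closure_toSubmonoid, hSsymm] at this
    obtain ⟨l, hl, hprod⟩ := Submonoid.exists_list_of_mem_closure hg'
    have h1S : (1 : G) ∈ S := Or.inl rfl
    obtain ⟨q0, hq0, hpath⟩ := travelList l hl ⟨⟨1, h1S⟩, ⟨0, by omega⟩⟩ rfl
    refine ⟨(l.map rep).flatten, ?_, ?_⟩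
    · apply NFA.mem_accepts.2
      exact ⟨_, rfl, (mem_evalFrom_iff M _ _ _).2 ⟨q0, hq0, hpath⟩⟩
    · show wordEval f (l.map rep).flatten = g
      rw [wordEval_flatten, List.map_map]
      have hcomp : (wordEval f ∘ rep) = id := funext hrep
      rw [hcomp, List.map_id]
      exact hprod

end easy


section hard
variable {X G : Type} [Fintype X] [Group G] (f : X → G)

theorem fg_of_isRational (H : Subgroup G) (hrat : IsRationalSubset f (H : Set G)) :
    H.FG := by
  classical
  obtain ⟨L, ⟨σ, hfin, M, hML⟩, himg⟩ := hrat
  subst hML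
  -- reachability / coreachability
  set Reach : σ → Prop := fun q => ∃ w, M.evalFrom M.start w = q with hReach
  set Coreach : σ → Prop := fun q => ∃ w, M.evalFrom q w ∈ M.accept with hCoreach
  set u : σ → List (X ⊕ X) := fun q =>
    if q = M.start then [] else if h : Reach q then Classical.choose h else [] with hu
  have hu_spec : ∀ q, Reach q → M.evalFrom M.start (u q) = q := by
    intro q hq
    by_cases h : q = M.start
    · simp [hu, h]
    · simp only [hu, if_neg h, dif_pos hq]
      exact Classical.choose_spec hq
  set v : σ → List (X ⊕ X) := fun q =>
    if q ∈ M.accept then [] else if h : Coreach q then Classical.choose h else [] with hv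
  have hv_spec : ∀ q, Coreach q → M.evalFrom q (v q) ∈ M.accept := by
    intro q hq
    by_cases h : q ∈ M.accept
    · simpa [hv, h] using h
    · simp only [hv, if_neg h, dif_pos hq]
      exact Classical.choose_spec hq
  have hv_acc : ∀ q, q ∈ M.accept → v q = [] := by intro q h; simp [hv, h]
  -- membership in H of evaluations of accepted words
  have hmemH : ∀ w : List (X ⊕ X), w ∈ M.accepts → wordEval f w ∈ H := by
    intro w hw
    have : wordEval f w ∈ (fun w : List (X ⊕ X) => wordHom f (FreeMonoid.ofList w)) '' M.accepts :=
      ⟨w, hw, rfl⟩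
    rwa [himg] at this
  -- the generators
  set gen1 : σ → (X ⊕ X) → G := fun q a =>
    if Reach q ∧ Coreach (M.step q a) then wordEval f (u q ++ [a] ++ v (M.step q a)) else 1
    with hgen1
  set gen2 : σ → G := fun q =>
    if Reach q ∧ Coreach q then wordEval f (u q ++ v q) else 1 with hgen2
  set S : Set G := Set.range (fun p : σ × (X ⊕ X) => gen1 p.1 p.2) ∪ Set.range gen2 with hgS
  have hSfin : S.Finite := (Set.finite_range _).union (Set.finite_range _)
  have accepted_mem : ∀ q (w : List (X ⊕ X)), Reach q → M.evalFrom q w ∈ M.accept →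
      wordEval f (u q ++ w) ∈ H := by
    intro q w hq hw
    apply hmemH
    rw [DFA.mem_accepts]
    show M.evalFrom M.start (u q ++ w) ∈ M.accept
    rw [M.evalFrom_of_append, hu_spec q hq]
    exact hw
  have hSH : S ⊆ (H : Set G) := by
    rintro x (⟨⟨q, a⟩, rfl⟩ | ⟨q, rfl⟩)
    · simp only [hgen1]
      split_ifs with h
      · obtain ⟨hq, hq'⟩ := h
        have : wordEval f (u q ++ ([a] ++ v (M.step q a))) ∈ H := by
          apply accepted_mem q _ hq
          have : M.evalFrom q ([a] ++ v (M.step q a)) = M.evalFrom (M.step q a) (v (M.step q a)) := by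
            rw [M.evalFrom_of_append]; rfl
          rw [this]
          exact hv_spec _ hq'
        simpa [List.append_assoc] using this
      · exact H.one_mem
    · simp only [hgen2]
      split_ifs with h
      · exact accepted_mem q _ h.1 (hv_spec q h.2)
      · exact H.one_mem
  -- key induction
  have key : ∀ (w : List (X ⊕ X)) (q : σ), Reach q → M.evalFrom q w ∈ M.accept →
      (wordEval f (v q))⁻¹ * wordEval f w ∈ Subgroup.closure S := by
    intro w
    induction w with
    | nil =>
      intro q hq hacc
      rw [hv_acc q hacc, wordEval_nil]
      simpa using Subgroup.one_mem _
    | cons a w ih =>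
      intro q hq hacc
      have hstep : M.evalFrom q (a :: w) = M.evalFrom (M.step q a) w := rfl
      rw [hstep] at hacc
      have hq' : Reach (M.step q a) := by
        obtain ⟨w0, hw0⟩ := hq
        simp only [hReach]
        exact ⟨w0 ++ [a], by rw [M.evalFrom_append_singleton, hw0]⟩
      have hcq' : Coreach (M.step q a) := by
        simp only [hCoreach]; exact ⟨w, hacc⟩
      have hcq : Coreach q := by
        simp only [hCoreach]; exact ⟨a :: w, by rw [hstep]; exact hacc⟩
      have h1 : gen1 q a = wordEval f (u q) * wordEval f [a] * wordEval f (v (M.step q a)) := by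
        simp only [hgen1, if_pos (show Reach q ∧ Coreach (M.step q a) from ⟨hq, hcq'⟩)]
        rw [wordEval_append, wordEval_append]
      have h2 : gen2 q = wordEval f (u q) * wordEval f (v q) := by
        simp only [hgen2, if_pos (show Reach q ∧ Coreach q from ⟨hq, hcq⟩), wordEval_append]
      have hg1 : gen1 q a ∈ Subgroup.closure S :=
        Subgroup.subset_closure (Or.inl ⟨(q, a), rfl⟩)
      have hg2 : gen2 q ∈ Subgroup.closure S :=
        Subgroup.subset_closure (Or.inr ⟨q, rfl⟩)
      have hih := ih (M.step q a) hq' hacc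
      have heq : (wordEval f (v q))⁻¹ * wordEval f (a :: w)
          = ((gen2 q)⁻¹ * gen1 q a) * ((wordEval f (v (M.step q a)))⁻¹ * wordEval f w) := by
        rw [h1, h2, wordEval_cons]
        group
      rw [heq]
      exact Subgroup.mul_mem _ (Subgroup.mul_mem _ (Subgroup.inv_mem _ hg2) hg1) hih
  -- conclude
  rw [Subgroup.fg_iff]
  refine ⟨S, ?_, hSfin⟩
  apply le_antisymm
  · exact (Subgroup.closure_le H).2 hSH
  · intro h hh
    have : h ∈ (fun w : List (X ⊕ X) => wordHom f (FreeMonoid.ofList w)) '' M.accepts := by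
      rw [himg]; exact hh
    obtain ⟨w, hw, rfl⟩ := this
    show wordEval f w ∈ Subgroup.closure S
    have hwacc : M.evalFrom M.start w ∈ M.accept := hw
    have hstartR : Reach M.start := by simp only [hReach]; exact ⟨[], rfl⟩
    have hkey := key w M.start hstartR hwacc
    have hcstart : Coreach M.start := by simp only [hCoreach]; exact ⟨w, hwacc⟩
    have hg2 : gen2 M.start ∈ Subgroup.closure S :=
      Subgroup.subset_closure (Or.inr ⟨M.start, rfl⟩)
    have h2 : gen2 M.start = wordEval f (v M.start) := by
      simp only [hgen2, if_pos (show Reach M.start ∧ Coreach M.start from ⟨hstartR, hcstart⟩)]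
      have : u M.start = [] := by simp [hu]
      rw [this, List.nil_append]
    have : wordEval f w = gen2 M.start * ((wordEval f (v M.start))⁻¹ * wordEval f w) := by
      rw [h2]; group
    rw [this]
    exact Subgroup.mul_mem _ hg2 hkey

end hard

end AnSei

/-- A subgroup `H` of a group `G` generated by a finite set is a rational subset
of `G` if and only if `H` is finitely generated. -/
theorem isRationalSubset_iff_fg {X G : Type} [Fintype X] [Group G] (f : X → G)
    (hgen : Subgroup.closure (Set.range f) = ⊤)
    (H : Subgroup G) :
    IsRationalSubset f (H : Set G) ↔ H.FG :=
  ⟨AnSei.fg_of_isRational f H, AnSei.isRational_of_fg f hgen H⟩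
end

section
/- Let G be a group generated by a finite set A, let π : (A ∪ A⁻¹)* → G be the canonical surjective monoid homomorphism, and let H be a subgroup of G. Then H is a recognizable subset of G if and only if H has finite index in G. -/
/-- A subset `K ⊆ G` is recognizable (with respect to the generating map `f : X → G`)
if its full preimage under the canonical homomorphism is a regular language
over the alphabet of generators and formal inverses. -/
def IsRecognizableSubset {X G : Type} [Group G] (f : X → G) (K : Set G) : Prop :=
  Language.IsRegular
    ({w : List (X ⊕ X) | wordHom f (FreeMonoid.ofList w) ∈ K} : Language (X ⊕ X))

lemma wordHom_ofList_append {X G : Type} [Group G] (f : X → G) (u v : List (X ⊕ X)) :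
    wordHom f (FreeMonoid.ofList (u ++ v)) =
      wordHom f (FreeMonoid.ofList u) * wordHom f (FreeMonoid.ofList v) := by
  rw [← map_mul]; rfl

lemma wordHom_swap {X G : Type} [Group G] (f : X → G) (a : X ⊕ X) :
    wordHom f (FreeMonoid.ofList [a.swap]) = (wordHom f (FreeMonoid.ofList [a]))⁻¹ := by
  cases a <;> simp [wordHom, FreeMonoid.lift_ofList]

lemma wordHom_invWord {X G : Type} [Group G] (f : X → G) (w : List (X ⊕ X)) :
    wordHom f (FreeMonoid.ofList ((w.map Sum.swap).reverse)) =
      (wordHom f (FreeMonoid.ofList w))⁻¹ := by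
  induction w with
  | nil => simp [wordHom]
  | cons a t ih =>
      have h1 : a :: t = [a] ++ t := rfl
      simp only [List.map_cons, List.reverse_cons]
      rw [wordHom_ofList_append, ih, h1, wordHom_ofList_append, wordHom_swap, mul_inv_rev]

lemma wordHom_surjective {X G : Type} [Group G] (f : X → G)
    (hgen : Subgroup.closure (Set.range f) = ⊤) :
    Function.Surjective fun w : List (X ⊕ X) => wordHom f (FreeMonoid.ofList w) := by
  intro g
  have hg : g ∈ Subgroup.closure (Set.range f) := hgen ▸ Subgroup.mem_top g
  induction hg using Subgroup.closure_induction with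
  | mem x hx =>
      obtain ⟨a, ha⟩ := hx
      exact ⟨[Sum.inl a], by simp [wordHom, FreeMonoid.lift_ofList, ha]⟩
  | one => exact ⟨[], by simp [wordHom]⟩
  | mul x y _ _ hx hy =>
      obtain ⟨u, hu⟩ := hx
      obtain ⟨v, hv⟩ := hy
      refine ⟨u ++ v, ?_⟩
      show wordHom f (FreeMonoid.ofList (u ++ v)) = x * y
      rw [wordHom_ofList_append]
      exact congrArg₂ (· * ·) hu hv
  | inv x _ hx =>
      obtain ⟨u, hu⟩ := hx
      refine ⟨(u.map Sum.swap).reverse, ?_⟩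
      show wordHom f (FreeMonoid.ofList ((u.map Sum.swap).reverse)) = x⁻¹
      rw [wordHom_invWord]
      exact congrArg (·⁻¹) hu

/-- A subgroup `H` of a group `G` generated by a finite set is a recognizable subset
of `G` if and only if `H` has finite index in `G`. -/
theorem isRecognizableSubset_iff_finiteIndex {X G : Type} [Fintype X] [Group G] (f : X → G)
    (hgen : Subgroup.closure (Set.range f) = ⊤)
    (H : Subgroup G) :
    IsRecognizableSubset f (H : Set G) ↔ H.FiniteIndex := by
  have hsurj : Function.Surjective fun w : List (X ⊕ X) => wordHom f (FreeMonoid.ofList w) :=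
    wordHom_surjective f hgen
  constructor
  · rintro ⟨σ, instF, M, hM⟩
    choose rep hrep' using hsurj
    have hrep : ∀ b : G, wordHom f (FreeMonoid.ofList (rep b)) = b := hrep'
    have key : Function.Injective fun q : G ⧸ H => M.eval (rep (Quotient.out q)⁻¹) := by
      intro q q' h
      simp only at h
      set g := Quotient.out q with hg
      set g' := Quotient.out q' with hg'
      have hmem : ∀ u : List (X ⊕ X),
          (g⁻¹ * wordHom f (FreeMonoid.ofList u) ∈ H) ↔
          (g'⁻¹ * wordHom f (FreeMonoid.ofList u) ∈ H) := by
        intro u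
        have h1 : M.eval (rep g⁻¹ ++ u) = M.eval (rep g'⁻¹ ++ u) := by
          simp only [DFA.eval, DFA.evalFrom_of_append]
          exact congrArg (fun s => M.evalFrom s u) h
        have h2 : (rep g⁻¹ ++ u ∈ M.accepts) ↔ (rep g'⁻¹ ++ u ∈ M.accepts) := by
          rw [DFA.mem_accepts, DFA.mem_accepts, h1]
        rw [hM] at h2
        have h3 : (wordHom f (FreeMonoid.ofList (rep g⁻¹ ++ u)) ∈ H) ↔
            (wordHom f (FreeMonoid.ofList (rep g'⁻¹ ++ u)) ∈ H) := h2
        rwa [wordHom_ofList_append, wordHom_ofList_append, hrep, hrep] at h3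
      have hin : g⁻¹ * g' ∈ H := by
        have := (hmem (rep g')).mpr (by rw [hrep]; simp [H.one_mem])
        rwa [hrep] at this
      have hq : (QuotientGroup.mk g : G ⧸ H) = QuotientGroup.mk g' := QuotientGroup.eq.mpr hin
      rw [hg, hg'] at hq
      simpa [Quotient.out_eq] using hq
    have : Finite (G ⧸ H) := Finite.of_injective _ key
    exact (Subgroup.finiteIndex_of_finite_quotient : H.FiniteIndex)
  · intro hFI
    have : Finite (G ⧸ H) := (Subgroup.finite_quotient_of_finiteIndex : Finite (G ⧸ H))
    have instF : Fintype (G ⧸ H) := Fintype.ofFinite _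
    refine ⟨G ⧸ H, instF,
      { step := fun q a => (Sum.elim f (fun x => (f x)⁻¹) a)⁻¹ • q
        start := QuotientGroup.mk (1 : G)
        accept := {QuotientGroup.mk (1 : G)} }, ?_⟩
    ext w
    show _ ∈ DFA.accepts _ ↔ _
    rw [DFA.mem_accepts]
    have heval : ∀ (w : List (X ⊕ X)) (g : G),
        DFA.evalFrom
          { step := fun q (a : X ⊕ X) => (Sum.elim f (fun x => (f x)⁻¹) a)⁻¹ • q
            start := QuotientGroup.mk (1 : G)
            accept := ({QuotientGroup.mk (1 : G)} : Set (G ⧸ H)) } (QuotientGroup.mk g) w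
          = QuotientGroup.mk ((wordHom f (FreeMonoid.ofList w))⁻¹ * g) := by
      intro w
      induction w with
      | nil => intro g; simp [DFA.evalFrom, wordHom]
      | cons a t ih =>
          intro g
          have h1 : a :: t = [a] ++ t := rfl
          rw [h1, DFA.evalFrom_of_append]
          have hstep : DFA.evalFrom
              { step := fun q (a : X ⊕ X) => (Sum.elim f (fun x => (f x)⁻¹) a)⁻¹ • q
                start := QuotientGroup.mk (1 : G)
                accept := ({QuotientGroup.mk (1 : G)} : Set (G ⧸ H)) } (QuotientGroup.mk g) [a]
              = QuotientGroup.mk ((Sum.elim f (fun x => (f x)⁻¹) a)⁻¹ * g) := rfl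
          refine (ih ((Sum.elim f (fun x => (f x)⁻¹) a)⁻¹ * g)).trans ?_
          have hx : wordHom f (FreeMonoid.ofList [a]) = Sum.elim f (fun x => (f x)⁻¹) a := by
            cases a <;> simp [wordHom, FreeMonoid.lift_ofList]
          rw [wordHom_ofList_append, hx, mul_inv_rev, mul_assoc]
    rw [show DFA.eval _ w = _ from heval w 1]
    simp only [mul_one, Set.mem_singleton_iff]
    rw [QuotientGroup.eq]
    simp only [inv_inv, mul_one]
    exact Iff.rfl
end

section
/- Let m ≥ 1 and let BS(1, m) = ⟨a, t ∣ t⁻¹ a t = aᵐ⟩ be the metabelian Baumslag–Solitar group, presented as the quotient of the free group on {a, t} by the normal closure of the single relator t⁻¹ a t a⁻ᵐ. Then for every element x ∈ BS(1, m), the centralizer C(x) = {g ∈ BS(1, m) : gx = xg} is an algebraic subset of BS(1, m). -/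
/-- The single relator `t⁻¹ a t a⁻ᵐ` of the Baumslag–Solitar group `BS(1, m)`,
where `a = FreeGroup.of true` and `t = FreeGroup.of false`. -/
def BSRels (m : ℕ) : Set (FreeGroup Bool) :=
  {(FreeGroup.of false)⁻¹ * FreeGroup.of true * FreeGroup.of false *
    (FreeGroup.of true ^ m)⁻¹}

/-- The Baumslag–Solitar group `BS(1, m) = ⟨a, t ∣ t⁻¹ a t = aᵐ⟩`, presented as the
quotient of the free group on two generators by the normal closure of `t⁻¹ a t a⁻ᵐ`. -/
def BS (m : ℕ) : Type := PresentedGroup (BSRels m)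

instance (m : ℕ) : Group (BS m) := by unfold BS; infer_instance


/-- Affine maps `y ↦ s*y + b` over `ℚ` with `s ≠ 0`, as a group under composition. -/
@[ext]
structure Aff where
  s : ℚ
  b : ℚ
  hs : s ≠ 0

namespace Aff

instance : Mul Aff := ⟨fun g h => ⟨g.s * h.s, g.b + g.s * h.b, mul_ne_zero g.hs h.hs⟩⟩
instance : One Aff := ⟨⟨1, 0, one_ne_zero⟩⟩
instance : Inv Aff := ⟨fun g => ⟨g.s⁻¹, -(g.s⁻¹ * g.b), inv_ne_zero g.hs⟩⟩

@[simp] lemma mul_s (g h : Aff) : (g * h).s = g.s * h.s := rfl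
@[simp] lemma mul_b (g h : Aff) : (g * h).b = g.b + g.s * h.b := rfl
@[simp] lemma one_s : (1 : Aff).s = 1 := rfl
@[simp] lemma one_b : (1 : Aff).b = 0 := rfl
@[simp] lemma inv_s (g : Aff) : g⁻¹.s = g.s⁻¹ := rfl
@[simp] lemma inv_b (g : Aff) : g⁻¹.b = -(g.s⁻¹ * g.b) := rfl

instance : Group Aff where
  mul_assoc g h k := by ext <;> simp <;> ring
  one_mul g := by ext <;> simp
  mul_one g := by ext <;> simp
  inv_mul_cancel g := by
    ext <;> simp [inv_mul_cancel₀ g.hs]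

/-- Translations, as a homomorphism. -/
def transHom : Multiplicative ℚ →* Aff where
  toFun q := ⟨1, Multiplicative.toAdd q, one_ne_zero⟩
  map_one' := by ext <;> simp
  map_mul' p q := by ext <;> simp

/-- Scalings by powers of `M⁻¹`, as a homomorphism. -/
def scaleHom (M : ℚ) (hM : M ≠ 0) : Multiplicative ℤ →* Aff where
  toFun z := ⟨M ^ (-Multiplicative.toAdd z), 0, zpow_ne_zero _ hM⟩
  map_one' := by ext <;> simp
  map_mul' p q := by ext <;> simp [neg_add, zpow_add₀ hM, mul_comm]

@[simp] lemma transHom_s (q) : (transHom q).s = 1 := rfl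
@[simp] lemma transHom_b (q) : (transHom q).b = Multiplicative.toAdd q := rfl
@[simp] lemma scaleHom_s (M hM z) : (scaleHom M hM z).s = M ^ (-Multiplicative.toAdd z) := rfl
@[simp] lemma scaleHom_b (M hM z) : (scaleHom M hM z).b = 0 := rfl

end Aff

namespace BSaux

variable {m : ℕ}

def A (m : ℕ) : BS m := PresentedGroup.of true
def T (m : ℕ) : BS m := PresentedGroup.of false

lemma trel (m : ℕ) : (T m)⁻¹ * A m * T m = A m ^ m := by
  have hmem : ((FreeGroup.of false)⁻¹ * FreeGroup.of true * FreeGroup.of false *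
      (FreeGroup.of true ^ m)⁻¹) ∈ Subgroup.normalClosure (BSRels m) :=
    Subgroup.subset_normalClosure rfl
  have h1 : (PresentedGroup.mk (BSRels m)) ((FreeGroup.of false)⁻¹ * FreeGroup.of true *
      FreeGroup.of false * (FreeGroup.of true ^ m)⁻¹) = 1 :=
    (QuotientGroup.eq_one_iff _).mpr hmem
  rw [map_mul, map_mul, map_mul, map_inv, map_inv, map_pow] at h1
  have := mul_inv_eq_one.mp h1
  exact this

end BSaux

namespace BSaux
variable {m : ℕ}

lemma conjA (m : ℕ) (j : ℤ) : (T m)⁻¹ * (A m) ^ j * T m = (A m) ^ (j * (m : ℤ)) := by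
  have h : ((T m)⁻¹ * A m * ((T m)⁻¹)⁻¹) ^ j = (T m)⁻¹ * (A m) ^ j * ((T m)⁻¹)⁻¹ :=
    conj_zpow ..
  rw [inv_inv] at h
  rw [← h, trel m, ← zpow_natCast (A m) m, ← zpow_mul, mul_comm (m:ℤ) j]

lemma a_t (m : ℕ) (j : ℤ) : (A m) ^ j * T m = T m * (A m) ^ (j * (m : ℤ)) := by
  have := conjA m j
  rw [← this]
  group

lemma a_tpow (k : ℕ) (j : ℤ) : (A m) ^ j * (T m) ^ k = (T m) ^ k * (A m) ^ (j * (m : ℤ) ^ k) := by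
  induction k generalizing j with
  | zero => simp
  | succ n ih =>
    rw [pow_succ', ← mul_assoc, a_t m j, mul_assoc, ih (j * m), ← mul_assoc, ← pow_succ']
    ring_nf

lemma tpow_inv_a (k : ℕ) (j : ℤ) :
    ((T m) ^ k)⁻¹ * (A m) ^ j = (A m) ^ (j * (m : ℤ) ^ k) * ((T m) ^ k)⁻¹ := by
  have h := a_tpow (m := m) k j
  calc ((T m) ^ k)⁻¹ * (A m) ^ j
      = ((T m) ^ k)⁻¹ * ((A m) ^ j * (T m) ^ k) * ((T m) ^ k)⁻¹ := by group
    _ = ((T m) ^ k)⁻¹ * ((T m) ^ k * (A m) ^ (j * (m : ℤ) ^ k)) * ((T m) ^ k)⁻¹ := by rw [h]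
    _ = (A m) ^ (j * (m : ℤ) ^ k) * ((T m) ^ k)⁻¹ := by group

/-- "Normal form" elements. -/
def NF (m : ℕ) (i k : ℕ) (j : ℤ) : BS m := (T m) ^ i * (A m) ^ j * ((T m) ^ k)⁻¹

lemma nf_mul (i k p r : ℕ) (j q : ℤ) :
    ∃ i' k' j', NF m i k j * NF m p r q = NF m i' k' j' := by
  rcases le_or_gt k p with h | h
  · obtain ⟨d, rfl⟩ : ∃ d, p = k + d := ⟨p - k, (Nat.add_sub_cancel' h).symm⟩
    refine ⟨i + d, r, j * (m : ℤ) ^ d + q, ?_⟩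
    have key := a_tpow (m := m) d j
    calc NF m i k j * NF m (k + d) r q
        = (T m) ^ i * ((A m) ^ j * (T m) ^ d) * (A m) ^ q * ((T m) ^ r)⁻¹ := by
          rw [NF, NF, pow_add]; group
      _ = (T m) ^ i * ((T m) ^ d * (A m) ^ (j * (m:ℤ) ^ d)) * (A m) ^ q * ((T m) ^ r)⁻¹ := by
          rw [key]
      _ = NF m (i + d) r (j * (m:ℤ) ^ d + q) := by rw [NF, pow_add, zpow_add]; group
  · obtain ⟨d, rfl⟩ : ∃ d, k = p + d := ⟨k - p, by omega⟩
    refine ⟨i, d + r, j + q * (m : ℤ) ^ d, ?_⟩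
    have key := tpow_inv_a (m := m) d q
    calc NF m i (p + d) j * NF m p r q
        = (T m) ^ i * (A m) ^ j * (((T m) ^ d)⁻¹ * (A m) ^ q) * ((T m) ^ r)⁻¹ := by
          rw [NF, NF, pow_add]; group
      _ = (T m) ^ i * (A m) ^ j * ((A m) ^ (q * (m:ℤ) ^ d) * ((T m) ^ d)⁻¹) * ((T m) ^ r)⁻¹ := by
          rw [key]
      _ = NF m i (d + r) (j + q * (m:ℤ) ^ d) := by rw [NF, pow_add, zpow_add]; group

def Hnf (m : ℕ) : Subgroup (BS m) where
  carrier := {g | ∃ i k j, g = NF m i k j}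
  one_mem' := ⟨0, 0, 0, by simp [NF]⟩
  mul_mem' := by
    rintro g h ⟨i, k, j, rfl⟩ ⟨p, r, q, rfl⟩
    exact nf_mul i k p r j q
  inv_mem' := by
    rintro g ⟨i, k, j, rfl⟩
    exact ⟨k, i, -j, by rw [NF, NF]; group⟩

lemma exists_nf (g : BS m) : ∃ i k j, g = NF m i k j := by
  refine PresentedGroup.generated_by (BSRels m) (Hnf m) (fun b => ?_) g
  cases b
  · exact ⟨1, 0, 0, by show T m = NF m 1 0 0; simp [NF]⟩
  · exact ⟨0, 0, 1, by show A m = NF m 0 0 1; simp [NF]⟩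

end BSaux
namespace BSaux
variable {m : ℕ}

/-- The `t`-exponent homomorphism. -/
def φ (m : ℕ) : BS m →* Multiplicative ℤ :=
  PresentedGroup.toGroup (f := fun b => if b then 1 else Multiplicative.ofAdd 1) (by
    rintro r hr
    have : r = (FreeGroup.of false)⁻¹ * FreeGroup.of true * FreeGroup.of false *
        (FreeGroup.of true ^ m)⁻¹ := hr
    subst this
    simp)

@[simp] lemma phi_A : φ m (A m) = 1 := PresentedGroup.toGroup.of _
@[simp] lemma phi_T : φ m (T m) = Multiplicative.ofAdd 1 := PresentedGroup.toGroup.of _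

lemma phi_nf (i k : ℕ) (j : ℤ) :
    φ m (NF m i k j) = Multiplicative.ofAdd ((i : ℤ) - (k : ℤ)) := by
  have h1 : (Multiplicative.ofAdd (1:ℤ)) ^ i = Multiplicative.ofAdd (i:ℤ) := by
    rw [← ofAdd_nsmul]; norm_num
  have h2 : (Multiplicative.ofAdd (1:ℤ)) ^ k = Multiplicative.ofAdd (k:ℤ) := by
    rw [← ofAdd_nsmul]; norm_num
  rw [NF, map_mul, map_mul, map_inv, map_pow, map_pow, map_zpow, phi_A, phi_T, h1, h2,
    one_zpow, mul_one, ← ofAdd_neg, ← ofAdd_add]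
  simp [sub_eq_add_neg]

lemma scale_pow (M : ℚ) (hM : M ≠ 0) (k : ℕ) :
    Aff.scaleHom M hM (.ofAdd 1) ^ k = Aff.scaleHom M hM (.ofAdd (k:ℤ)) := by
  rw [← map_pow]; congr 1; rw [← ofAdd_nsmul]; norm_num

lemma trans_pow (k : ℕ) :
    Aff.transHom (.ofAdd (1:ℚ)) ^ k = Aff.transHom (.ofAdd (k:ℚ)) := by
  rw [← map_pow]; congr 1; rw [← ofAdd_nsmul]; norm_num

lemma trans_zpow (j : ℤ) :
    Aff.transHom (.ofAdd (1:ℚ)) ^ j = Aff.transHom (.ofAdd (j:ℚ)) := by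
  rw [← map_zpow]; congr 1; rw [← ofAdd_zsmul]; norm_num

/-- The affine representation. -/
def ρ (m : ℕ) (hm : (m : ℚ) ≠ 0) : BS m →* Aff :=
  PresentedGroup.toGroup
    (f := fun b => if b then Aff.transHom (.ofAdd 1) else Aff.scaleHom m hm (.ofAdd 1)) (by
    rintro r hr
    have : r = (FreeGroup.of false)⁻¹ * FreeGroup.of true * FreeGroup.of false *
        (FreeGroup.of true ^ m)⁻¹ := hr
    subst this
    simp only [map_mul, map_inv, map_pow, FreeGroup.lift_apply_of, if_true, if_false]
    rw [trans_pow]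
    ext
    · simp [hm]
    · simp [hm])

@[simp] lemma rho_A (hm : (m:ℚ) ≠ 0) : ρ m hm (A m) = Aff.transHom (.ofAdd 1) :=
  PresentedGroup.toGroup.of _

@[simp] lemma rho_T (hm : (m:ℚ) ≠ 0) : ρ m hm (T m) = Aff.scaleHom m hm (.ofAdd 1) :=
  PresentedGroup.toGroup.of _

lemma rho_nf (hm : (m:ℚ) ≠ 0) (i k : ℕ) (j : ℤ) :
    (ρ m hm (NF m i k j)).s = (m:ℚ) ^ ((k:ℤ) - (i:ℤ)) ∧
    (ρ m hm (NF m i k j)).b = (m:ℚ) ^ (-(i:ℤ)) * j := by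
  rw [NF, map_mul, map_mul, map_inv, map_pow, map_pow, map_zpow, rho_A, rho_T,
    scale_pow, scale_pow, trans_zpow, ← map_inv]
  constructor
  · simp [zpow_sub₀ hm, zpow_neg, Aff.scaleHom]
    ring
  · simp [Aff.scaleHom]

end BSaux
namespace BSaux
variable {m : ℕ}

lemma nf_lift (i : ℕ) (j : ℤ) (d : ℕ) :
    NF m i i j = NF m (i + d) (i + d) (j * (m:ℤ) ^ d) := by
  have key := a_tpow (m := m) d j
  calc NF m i i j = (T m) ^ i * ((A m) ^ j * (T m) ^ d) * ((T m) ^ d)⁻¹ * ((T m) ^ i)⁻¹ := by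
        rw [NF]; group
    _ = (T m) ^ i * ((T m) ^ d * (A m) ^ (j * (m:ℤ) ^ d)) * ((T m) ^ d)⁻¹ * ((T m) ^ i)⁻¹ := by
        rw [key]
    _ = NF m (i + d) (i + d) (j * (m:ℤ) ^ d) := by rw [NF, pow_add]; group

lemma nf_level_mul (L : ℕ) (u v : ℤ) :
    NF m L L u * NF m L L v = NF m L L (u + v) := by
  rw [NF, NF, NF, zpow_add]
  group

lemma ker_comm (i p : ℕ) (j q : ℤ) : Commute (NF m i i j) (NF m p p q) := by
  rw [nf_lift i j p, nf_lift p q i, Commute]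
  have h1 : i + p = p + i := by omega
  rw [h1, SemiconjBy, nf_level_mul, nf_level_mul]
  have : j * (m:ℤ) ^ p + q * (m:ℤ) ^ i = q * (m:ℤ) ^ i + j * (m:ℤ) ^ p := add_comm _ _
  rw [this]

lemma nf_zero (i : ℕ) : NF m i i 0 = 1 := by simp [NF]

lemma bs_one_comm (g h : BS 1) : g * h = h * g := by
  have hAT : A 1 * T 1 = T 1 * A 1 := by
    have := a_t 1 1
    simpa using this
  have cent : ∀ (u : BS 1), (A 1 * u = u * A 1) → (T 1 * u = u * T 1) →
      ∀ z : BS 1, z ∈ Subgroup.centralizer {u} := by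
    intro u hA hT z
    refine PresentedGroup.generated_by (BSRels 1) _ (fun c => ?_) z
    cases c
    · show T 1 ∈ Subgroup.centralizer {u}
      rw [Subgroup.mem_centralizer_iff]
      intro y hy
      rw [Set.mem_singleton_iff] at hy
      subst hy
      exact hT.symm
    · show A 1 ∈ Subgroup.centralizer {u}
      rw [Subgroup.mem_centralizer_iff]
      intro y hy
      rw [Set.mem_singleton_iff] at hy
      subst hy
      exact hA.symm
  have hA1 : ∀ z : BS 1, A 1 * z = z * A 1 := fun z =>
    Subgroup.mem_centralizer_iff.mp (cent (A 1) rfl hAT.symm z) _ (Set.mem_singleton _)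
  have hT1 : ∀ z : BS 1, T 1 * z = z * T 1 := fun z =>
    Subgroup.mem_centralizer_iff.mp (cent (T 1) hAT rfl z) _ (Set.mem_singleton _)
  exact (Subgroup.mem_centralizer_iff.mp (cent h (hA1 h) (hT1 h) g) _ (Set.mem_singleton _)).symm

end BSaux
namespace BSaux
variable {m : ℕ}

lemma cast_facts (hm2 : 2 ≤ m) : (0:ℚ) < (m:ℚ) ∧ ((m:ℚ) ≠ 0) ∧ ((m:ℚ) ≠ 1) := by
  have h : (2:ℚ) ≤ (m:ℚ) := by exact_mod_cast hm2
  refine ⟨by linarith, by linarith, by linarith⟩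

lemma slope_one (hm2 : 2 ≤ m) {i k p : ℕ} {j q : ℤ} (hq : q ≠ 0)
    (h : NF m i k j * NF m p p q = NF m p p q * NF m i k j) : i = k := by
  obtain ⟨hpos, hQ, hne1⟩ := cast_facts hm2
  have h' := congrArg (ρ m hQ) h
  rw [map_mul, map_mul] at h'
  have hb := congrArg Aff.b h'
  obtain ⟨hs1, hb1⟩ := rho_nf hQ i k j
  obtain ⟨hs2, hb2⟩ := rho_nf hQ p p q
  rw [Aff.mul_b, Aff.mul_b, hs1, hb1, hs2, hb2] at hb
  have hs2' : ((p:ℤ) - (p:ℤ)) = 0 := by ring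
  rw [hs2', zpow_zero] at hb
  -- hb : m^(-i) j + m^(k-i) * (m^(-p) q) = m^(-p) q + 1 * (m^(-i) j)
  have hc : (m:ℚ) ^ (-(p:ℤ)) * (q:ℚ) ≠ 0 :=
    mul_ne_zero (zpow_ne_zero _ hQ) (Int.cast_ne_zero.mpr hq)
  have hS : (m:ℚ) ^ ((k:ℤ) - (i:ℤ)) = 1 := by
    have : (m:ℚ) ^ ((k:ℤ) - (i:ℤ)) * ((m:ℚ) ^ (-(p:ℤ)) * (q:ℚ))
        = 1 * ((m:ℚ) ^ (-(p:ℤ)) * (q:ℚ)) := by linarith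
    exact mul_right_cancel₀ hc this
  have : ((k:ℤ) - (i:ℤ)) = 0 := by
    have := zpow_right_injective₀ hpos hne1 (a := (m:ℚ))
    have h0 : (m:ℚ) ^ ((k:ℤ) - (i:ℤ)) = (m:ℚ) ^ (0:ℤ) := by simpa using hS
    exact this h0
  omega

lemma ker_triv (hm2 : 2 ≤ m) {i p r : ℕ} {j q : ℤ} (hpr : p ≠ r)
    (h : NF m i i j * NF m p r q = NF m p r q * NF m i i j) : j = 0 := by
  obtain ⟨hpos, hQ, hne1⟩ := cast_facts hm2
  have h' := congrArg (ρ m hQ) h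
  rw [map_mul, map_mul] at h'
  have hb := congrArg Aff.b h'
  obtain ⟨hs1, hb1⟩ := rho_nf hQ i i j
  obtain ⟨hs2, hb2⟩ := rho_nf hQ p r q
  rw [Aff.mul_b, Aff.mul_b, hs1, hb1, hs2, hb2] at hb
  have hs1' : ((i:ℤ) - (i:ℤ)) = 0 := by ring
  rw [hs1', zpow_zero] at hb
  -- hb : m^(-i)*j + 1 * (m^(-p)*q) = m^(-p)*q + m^(r-p) * (m^(-i)*j)
  have hSne : (m:ℚ) ^ ((r:ℤ) - (p:ℤ)) ≠ 1 := by
    intro hcon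
    have h0 : (m:ℚ) ^ ((r:ℤ) - (p:ℤ)) = (m:ℚ) ^ (0:ℤ) := by simpa using hcon
    have := zpow_right_injective₀ hpos hne1 (a := (m:ℚ)) h0
    omega
  have hB : (m:ℚ) ^ (-(i:ℤ)) * (j:ℚ) = 0 := by
    by_contra hBne
    apply hSne
    have : (m:ℚ) ^ ((r:ℤ) - (p:ℤ)) * ((m:ℚ) ^ (-(i:ℤ)) * (j:ℚ))
        = 1 * ((m:ℚ) ^ (-(i:ℤ)) * (j:ℚ)) := by linarith
    exact mul_right_cancel₀ hBne this
  have : (j:ℚ) = 0 := by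
    rcases mul_eq_zero.mp hB with h0 | h0
    · exact absurd h0 (zpow_ne_zero _ hQ)
    · exact h0
  exact_mod_cast this

end BSaux
section Grammars

open ContextFreeGrammar

variable {T : Type}

lemma split_unique {N : Type} {p q α β : List (Symbol T N)} {x y : N}
    (hα : ∀ s ∈ α, ∃ a, s = Symbol.terminal a) (hβ : ∀ s ∈ β, ∃ a, s = Symbol.terminal a)
    (h : p ++ Symbol.nonterminal x :: q = α ++ Symbol.nonterminal y :: β) :
    p = α ∧ x = y ∧ q = β := by
  rcases List.append_eq_append_iff.mp h with ⟨a', ha1, ha2⟩ | ⟨c', hc1, hc2⟩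
  · cases a' with
    | nil =>
      simp at ha1 ha2
      obtain ⟨h1, h2⟩ := ha2
      exact ⟨ha1.symm, h1, h2⟩
    | cons s a'' =>
      have hs : s ∈ α := by rw [ha1]; simp
      obtain ⟨a, rfl⟩ := hα s hs
      have : Symbol.nonterminal x = Symbol.terminal a := by
        have := congrArg (fun l => l.head?) ha2
        simpa using this
      exact absurd this (by simp)
  · cases c' with
    | nil =>
      simp at hc1 hc2
      obtain ⟨h1, h2⟩ := hc2
      exact ⟨hc1, h1.symm, h2.symm⟩
    | cons s c'' =>
      have h2 : β = c'' ++ Symbol.nonterminal x :: q := by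
        have := congrArg List.tail hc2
        simpa using this
      have hs : Symbol.nonterminal x ∈ β := by rw [h2]; simp
      obtain ⟨a, ha⟩ := hβ _ hs
      exact absurd ha (by simp)

lemma terminal_str {N : Type} (w : List T) :
    ∀ s ∈ (w.map (Symbol.terminal : T → Symbol T N)), ∃ a, s = Symbol.terminal a := by
  intro s hs
  obtain ⟨a, -, rfl⟩ := List.mem_map.mp hs
  exact ⟨a, rfl⟩

lemma no_rewrite_terminal {N : Type} {r : ContextFreeRule T N} {w : List T} {v}
    (h : r.Rewrites (w.map Symbol.terminal) v) : False := by
  obtain ⟨p, q, hpq, -⟩ := h.exists_parts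
  have : Symbol.nonterminal r.input ∈ List.map (Symbol.terminal : T → Symbol T N) w := by
    rw [hpq]; simp
  obtain ⟨a, -, ha⟩ := List.mem_map.mp this
  exact absurd ha (by simp)

/-- A derivation-invariant count argument. -/
lemma derives_count {g : ContextFreeGrammar T} (c : Symbol T g.NT → ℤ)
    (hr : ∀ r ∈ g.rules, (r.output.map c).sum = c (Symbol.nonterminal r.input))
    {u v : List (Symbol T g.NT)} (h : g.Derives u v) :
    (u.map c).sum = (v.map c).sum := by
  induction h with
  | refl => rfl
  | tail _ step ih =>
    obtain ⟨r, hrg, hrw⟩ := step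
    obtain ⟨p, q, h1, h2⟩ := hrw.exists_parts
    rw [ih, h1, h2]
    simp only [List.map_append, List.sum_append, List.map_cons, List.sum_cons]
    rw [← hr r hrg]
    simp

/-- Grammar for the Kleene star of a finite set of words. -/
@[reducible] noncomputable def starGrammar (ws : List (List T)) : ContextFreeGrammar T where
  NT := Unit
  initial := ()
  rules := @List.toFinset _ (Classical.decEq _) ((⟨(), []⟩ : ContextFreeRule T Unit) ::
    ws.map (fun w => ⟨(), w.map Symbol.terminal ++ [Symbol.nonterminal ()]⟩))

lemma mem_starGrammar_rules (ws : List (List T)) (r : ContextFreeRule T Unit) :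
    r ∈ (starGrammar ws).rules ↔ (r = ⟨(), []⟩ ∨
      ∃ w ∈ ws, r = ⟨(), w.map Symbol.terminal ++ [Symbol.nonterminal ()]⟩) := by
  have heq : (starGrammar ws).rules = @List.toFinset _ (Classical.decEq _)
      ((⟨(), []⟩ : ContextFreeRule T Unit) ::
        ws.map (fun w => ⟨(), w.map Symbol.terminal ++ [Symbol.nonterminal ()]⟩)) := rfl
  rw [heq, @List.mem_toFinset, List.mem_cons, List.mem_map]
  constructor
  · rintro (rfl | ⟨w, hw, rfl⟩)
    · exact Or.inl rfl
    · exact Or.inr ⟨w, hw, rfl⟩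
  · rintro (rfl | ⟨w, hw, rfl⟩)
    · exact Or.inl rfl
    · exact Or.inr ⟨w, hw, rfl⟩

lemma starGrammar_derives (ws : List (List T)) (l : List (List T)) (hl : ∀ u ∈ l, u ∈ ws) :
    (starGrammar ws).Derives [Symbol.nonterminal ()]
      ((l.flatten.map Symbol.terminal) ++ [Symbol.nonterminal ()]) := by
  induction l with
  | nil =>
    simp only [List.flatten_nil, List.map_nil, List.nil_append]
    exact Derives.refl _
  | cons w l' ih =>
    have hw : w ∈ ws := hl w (by simp)
    have hrule : (⟨(), w.map Symbol.terminal ++ [Symbol.nonterminal ()]⟩ :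
        ContextFreeRule T Unit) ∈ (starGrammar ws).rules :=
      (mem_starGrammar_rules ws _).mpr (Or.inr ⟨w, hw, rfl⟩)
    have step : (starGrammar ws).Produces [Symbol.nonterminal ()]
        (w.map Symbol.terminal ++ [Symbol.nonterminal ()]) :=
      ⟨_, hrule, ContextFreeRule.Rewrites.input_output⟩
    have ih' := ih (fun u hu => hl u (by simp [hu]))
    have ext := ih'.append_left (w.map Symbol.terminal)
    refine step.trans_derives ?_
    simpa using ext

lemma starGrammar_mem (ws : List (List T)) (l : List (List T)) (hl : ∀ u ∈ l, u ∈ ws) :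
    l.flatten ∈ (starGrammar ws).language := by
  rw [mem_language_iff]
  refine (starGrammar_derives ws l hl).trans ?_
  have hrule : (⟨(), []⟩ : ContextFreeRule T Unit) ∈ (starGrammar ws).rules :=
    (mem_starGrammar_rules ws _).mpr (Or.inl rfl)
  refine Relation.ReflTransGen.single ⟨_, hrule, ?_⟩
  have := ContextFreeRule.rewrites_of_exists_parts
    (⟨(), []⟩ : ContextFreeRule T Unit) (l.flatten.map Symbol.terminal) []
  simpa using this

lemma starGrammar_inv (ws : List (List T)) {s : List (Symbol T Unit)}
    (h : (starGrammar ws).Derives [Symbol.nonterminal ()] s) :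
    (∃ l : List (List T), (∀ u ∈ l, u ∈ ws) ∧
        s = (l.flatten.map Symbol.terminal) ++ [Symbol.nonterminal ()]) ∨
    (∃ l : List (List T), (∀ u ∈ l, u ∈ ws) ∧ s = l.flatten.map Symbol.terminal) := by
  induction h with
  | refl => exact Or.inl ⟨[], by simp, by simp⟩
  | tail _ step ih =>
    obtain ⟨r, hrg, hrw⟩ := step
    rcases ih with ⟨l, hl, rfl⟩ | ⟨l, hl, rfl⟩
    · obtain ⟨p, q, h1, h2⟩ := hrw.exists_parts
      have h1' : p ++ Symbol.nonterminal r.input :: q =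
          (l.flatten.map Symbol.terminal) ++ Symbol.nonterminal () :: [] := by
        rw [h1]; simp
      obtain ⟨rfl, -, rfl⟩ := split_unique (terminal_str _) (by simp) h1'
      rcases (mem_starGrammar_rules ws r).mp hrg with rfl | ⟨w, hw, rfl⟩
      · right
        exact ⟨l, hl, by simpa using h2⟩
      · left
        refine ⟨l ++ [w], ?_, ?_⟩
        · intro u hu
          rcases List.mem_append.mp hu with h' | h'
          · exact hl u h'
          · simp at h'; subst h'; exact hw
        · rw [h2]; simp
    · exact absurd hrw (no_rewrite_terminal)

lemma starGrammar_lang (ws : List (List T)) {w : List T}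
    (h : w ∈ (starGrammar ws).language) :
    ∃ l : List (List T), (∀ u ∈ l, u ∈ ws) ∧ w = l.flatten := by
  rw [mem_language_iff] at h
  rcases starGrammar_inv ws h with ⟨l, hl, heq⟩ | ⟨l, hl, heq⟩
  · exfalso
    have : Symbol.nonterminal () ∈ List.map (Symbol.terminal : T → Symbol T Unit) w := by
      rw [heq]; simp
    obtain ⟨a, -, ha⟩ := List.mem_map.mp this
    exact absurd ha (by simp)
  · exact ⟨l, hl, List.map_injective_iff.mpr (fun a b hab => by injection hab) heq⟩

end Grammars
section KGrammar
open ContextFreeGrammar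

/-- The alphabet of `BS m`: generators and formal inverses. -/
abbrev BT := Bool ⊕ Bool

def tl : BT := Sum.inl false
def tl' : BT := Sum.inr false
def al : BT := Sum.inl true
def al' : BT := Sum.inr true

def kRules : List (ContextFreeRule BT Bool) :=
  [⟨false, [Symbol.terminal tl, Symbol.nonterminal false, Symbol.terminal tl']⟩,
   ⟨false, [Symbol.nonterminal true]⟩,
   ⟨true, []⟩,
   ⟨true, [Symbol.terminal al, Symbol.nonterminal true]⟩,
   ⟨true, [Symbol.terminal al', Symbol.nonterminal true]⟩]

@[reducible] noncomputable def kGrammar : ContextFreeGrammar BT where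
  NT := Bool
  initial := false
  rules := @List.toFinset _ (Classical.decEq _) kRules

lemma mem_kGrammar_rules (r : ContextFreeRule BT Bool) :
    r ∈ kGrammar.rules ↔ r ∈ kRules := by
  have heq : kGrammar.rules = @List.toFinset _ (Classical.decEq _) kRules := rfl
  rw [heq, @List.mem_toFinset]

/-- The letter-count function: `t ↦ 1`, `t⁻¹ ↦ -1`, others `0`. -/
def cl : BT → ℤ := fun σ =>
  match σ with
  | Sum.inl false => 1
  | Sum.inr false => -1
  | _ => 0

def cnt : Symbol BT Bool → ℤ := fun s =>
  match s with
  | Symbol.terminal σ => cl σ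
  | Symbol.nonterminal _ => 0

lemma kGrammar_count {w : List BT} (h : w ∈ kGrammar.language) :
    (w.map cl).sum = 0 := by
  rw [mem_language_iff] at h
  have := derives_count (g := kGrammar) cnt (fun r hr => ?_) h
  · have h1 : (([Symbol.nonterminal kGrammar.initial] :
        List (Symbol BT Bool)).map cnt).sum = 0 := by simp [cnt]
    rw [h1] at this
    have h2 : ((w.map Symbol.terminal).map cnt).sum = (w.map cl).sum := by
      rw [List.map_map]; rfl
    omega
  · rw [mem_kGrammar_rules, kRules] at hr
    fin_cases hr <;> simp [cnt, cl, tl, tl', al, al']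

lemma kGrammar_mem (i : ℕ) (u : List BT) (hu : ∀ σ ∈ u, σ = al ∨ σ = al') :
    (List.replicate i tl ++ u ++ List.replicate i tl') ∈ kGrammar.language := by
  have hr1 : (⟨false, [Symbol.terminal tl, Symbol.nonterminal false, Symbol.terminal tl']⟩ :
      ContextFreeRule BT Bool) ∈ kGrammar.rules := by
    rw [mem_kGrammar_rules]; simp [kRules]
  have hr2 : (⟨false, [Symbol.nonterminal true]⟩ : ContextFreeRule BT Bool)
      ∈ kGrammar.rules := by rw [mem_kGrammar_rules]; simp [kRules]
  have hr3 : (⟨true, []⟩ : ContextFreeRule BT Bool) ∈ kGrammar.rules := by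
    rw [mem_kGrammar_rules]; simp [kRules]
  -- stage 1 : wrap with t ... t⁻¹
  have stage1 : ∀ n : ℕ, kGrammar.Derives [Symbol.nonterminal false]
      ((List.replicate n tl).map Symbol.terminal ++ [Symbol.nonterminal false] ++
        (List.replicate n tl').map Symbol.terminal) := by
    intro n
    induction n with
    | zero => simpa using Derives.refl (g := kGrammar) [Symbol.nonterminal false]
    | succ n ih =>
      have step : kGrammar.Produces [Symbol.nonterminal false]
          [Symbol.terminal tl, Symbol.nonterminal false, Symbol.terminal tl'] :=
        ⟨_, hr1, by simpa using ContextFreeRule.Rewrites.input_output⟩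
      refine step.trans_derives ?_
      have := (ih.append_left [Symbol.terminal tl]).append_right [Symbol.terminal tl']
      refine this.trans ?_
      have heq : [Symbol.terminal tl] ++ ((List.replicate n tl).map Symbol.terminal ++
            [Symbol.nonterminal false] ++ (List.replicate n tl').map Symbol.terminal) ++
            [Symbol.terminal tl'] =
          (List.replicate (n+1) tl).map Symbol.terminal ++ [Symbol.nonterminal false] ++
            (List.replicate (n+1) tl').map Symbol.terminal := by
        rw [List.replicate_succ, List.replicate_succ' (n := n) (a := tl')]
        simp
      rw [heq]
  -- stage 2 : middle letters
  have stage2 : ∀ v : List BT, (∀ σ ∈ v, σ = al ∨ σ = al') →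
      kGrammar.Derives [Symbol.nonterminal true]
        (v.map Symbol.terminal ++ [Symbol.nonterminal true]) := by
    intro v hv
    induction v with
    | nil => simpa using Derives.refl (g := kGrammar) [Symbol.nonterminal true]
    | cons σ v' ih =>
      have hrσ : (⟨true, [Symbol.terminal σ, Symbol.nonterminal true]⟩ :
          ContextFreeRule BT Bool) ∈ kGrammar.rules := by
        rw [mem_kGrammar_rules]
        rcases hv σ (by simp) with rfl | rfl <;> simp [kRules]
      have step : kGrammar.Produces [Symbol.nonterminal true]
          [Symbol.terminal σ, Symbol.nonterminal true] :=
        ⟨_, hrσ, by simpa using ContextFreeRule.Rewrites.input_output⟩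
      refine step.trans_derives ?_
      have := (ih (fun τ hτ => hv τ (by simp [hτ]))).append_left [Symbol.terminal σ]
      simpa using this
  rw [mem_language_iff]
  set P := List.replicate i (Symbol.terminal tl : Symbol BT Bool) with hP
  set Q := List.replicate i (Symbol.terminal tl' : Symbol BT Bool) with hQ
  set U := u.map (Symbol.terminal : BT → Symbol BT Bool) with hU
  have d1 : kGrammar.Derives [Symbol.nonterminal false]
      (P ++ ([Symbol.nonterminal false] ++ Q)) := by
    simpa [List.append_assoc] using stage1 i
  have d2 : kGrammar.Derives [Symbol.nonterminal false]
      (P ++ ([Symbol.nonterminal true] ++ Q)) := by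
    refine d1.trans_produces ⟨_, hr2, ?_⟩
    have := ContextFreeRule.rewrites_of_exists_parts
      (⟨false, [Symbol.nonterminal true]⟩ : ContextFreeRule BT Bool) P Q
    simpa [List.append_assoc] using this
  have d3 : kGrammar.Derives [Symbol.nonterminal false]
      (P ++ ((U ++ [Symbol.nonterminal true]) ++ Q)) :=
    d2.trans (((stage2 u hu).append_right Q).append_left P)
  have d4 : kGrammar.Produces (P ++ ((U ++ [Symbol.nonterminal true]) ++ Q))
      (P ++ (U ++ Q)) := by
    refine ⟨_, hr3, ?_⟩
    have := ContextFreeRule.rewrites_of_exists_parts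
      (⟨true, []⟩ : ContextFreeRule BT Bool) (P ++ U) Q
    simpa [List.append_assoc] using this
  have final := d3.trans_produces d4
  have hw : List.map (Symbol.terminal : BT → Symbol BT Bool)
      (List.replicate i tl ++ u ++ List.replicate i tl') = P ++ (U ++ Q) := by
    simp [hP, hQ, hU, List.map_append, List.map_replicate]
  rw [hw]
  exact final

end KGrammar
namespace BSaux
variable {m : ℕ}

/-- The canonical word evaluation map for `BS m`. -/
def πbs (m : ℕ) : FreeMonoid BT →* BS m :=
  wordHom (fun b : Bool => (PresentedGroup.of b : BS m))

lemma pi_append (w v : List BT) :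
    πbs m (.ofList (w ++ v)) = πbs m (.ofList w) * πbs m (.ofList v) := by
  rw [FreeMonoid.ofList_append, map_mul]

@[simp] lemma pi_tl : πbs m (.ofList [tl]) = T m := rfl
@[simp] lemma pi_tl' : πbs m (.ofList [tl']) = (T m)⁻¹ := rfl
@[simp] lemma pi_al : πbs m (.ofList [al]) = A m := rfl
@[simp] lemma pi_al' : πbs m (.ofList [al']) = (A m)⁻¹ := rfl

lemma pi_replicate (n : ℕ) (σ : BT) :
    πbs m (.ofList (List.replicate n σ)) = (πbs m (.ofList [σ])) ^ n := by
  induction n with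
  | zero => simp [FreeMonoid.ofList_nil]
  | succ k ih =>
    rw [List.replicate_succ, pow_succ']
    have : (σ :: List.replicate k σ) = [σ] ++ List.replicate k σ := rfl
    rw [this, pi_append, ih]

/-- A word whose image is `(A m) ^ j`. -/
def aword (j : ℤ) : List BT :=
  if 0 ≤ j then List.replicate j.toNat al else List.replicate (-j).toNat al'

lemma pi_aword (j : ℤ) : πbs m (.ofList (aword j)) = (A m) ^ j := by
  rw [aword]
  split_ifs with h
  · rw [pi_replicate, pi_al, ← zpow_natCast, Int.toNat_of_nonneg h]
  · rw [pi_replicate, pi_al', inv_pow, ← zpow_natCast, Int.toNat_of_nonneg (by omega),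
      ← zpow_neg, neg_neg]

lemma aword_letters (j : ℤ) : ∀ σ ∈ aword j, σ = al ∨ σ = al' := by
  intro σ hσ
  rw [aword] at hσ
  split_ifs at hσ <;> rw [List.eq_of_mem_replicate hσ] <;> simp

/-- The word representing `NF m i k j`. -/
def wordNF (i k : ℕ) (j : ℤ) : List BT :=
  List.replicate i tl ++ aword j ++ List.replicate k tl'

lemma pi_wordNF (i k : ℕ) (j : ℤ) : πbs m (.ofList (wordNF i k j)) = NF m i k j := by
  rw [wordNF, pi_append, pi_append, pi_replicate, pi_replicate, pi_tl, pi_tl', pi_aword,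
    NF, inv_pow]

lemma phi_count (w : List BT) :
    φ m (πbs m (.ofList w)) = Multiplicative.ofAdd ((w.map cl).sum) := by
  induction w with
  | nil => simp [FreeMonoid.ofList_nil]
  | cons σ w' ih =>
    have : (σ :: w') = [σ] ++ w' := rfl
    rw [this, pi_append, map_mul, ih]
    have hσ : φ m (πbs m (.ofList [σ])) = Multiplicative.ofAdd (cl σ) := by
      rcases σ with b | b <;> cases b
      · show φ m (T m) = _
        simp [cl]
      · show φ m (A m) = _
        simp [cl]
      · show φ m ((T m)⁻¹) = _
        simp [cl]
      · show φ m ((A m)⁻¹) = _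
        simp [cl]
    rw [hσ]
    simp [ofAdd_add]

lemma pi_join_comm (x : BS m) (l : List (List BT))
    (h : ∀ u ∈ l, πbs m (.ofList u) * x = x * πbs m (.ofList u)) :
    πbs m (.ofList l.flatten) * x = x * πbs m (.ofList l.flatten) := by
  induction l with
  | nil =>
    simp [FreeMonoid.ofList_nil]
  | cons u l' ih =>
    rw [List.flatten_cons, pi_append]
    have h1 := h u (by simp)
    have h2 := ih (fun v hv => h v (by simp [hv]))
    rw [mul_assoc, h2, ← mul_assoc, h1, mul_assoc]

lemma pi_join_pow (w : List BT) (n : ℕ) :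
    πbs m (.ofList (List.replicate n w).flatten) = (πbs m (.ofList w)) ^ n := by
  induction n with
  | zero => simp [FreeMonoid.ofList_nil]
  | succ k ih =>
    rw [List.replicate_succ, List.flatten_cons, pi_append, ih, pow_succ']

end BSaux

namespace BSaux

lemma flatten_singletons (l : List BT) : ((l.map fun σ => [σ]).flatten) = l := by
  induction l with
  | nil => simp
  | cons a l ih => simp [ih]

lemma image_eq (m : ℕ) :
    (fun w : List BT => wordHom (fun b : Bool => (PresentedGroup.of b : BS m))
      (FreeMonoid.ofList w)) = (fun w : List BT => πbs m (FreeMonoid.ofList w)) := rfl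

lemma top_case (m : ℕ) (x : BS m) (hall : ∀ g : BS m, g * x = x * g) :
    IsAlgebraicSubset (fun b : Bool => (PresentedGroup.of b : BS m))
      {g : BS m | g * x = x * g} := by
  refine ⟨(starGrammar [[tl], [tl'], [al], [al']]).language, ⟨_, rfl⟩, ?_⟩
  rw [image_eq]
  ext (g : BS m)
  show (∃ w : List BT, w ∈ _ ∧ πbs m (FreeMonoid.ofList w) = g) ↔ g * _ = _ * g
  constructor
  · rintro ⟨w, -, rfl⟩
    exact hall _
  · intro _
    obtain ⟨i, k, j, rfl⟩ := exists_nf g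
    refine ⟨wordNF i k j, ?_, pi_wordNF i k j⟩
    have hmem := starGrammar_mem [[tl], [tl'], [al], [al']]
      ((wordNF i k j).map fun σ => [σ]) ?_
    · rwa [flatten_singletons] at hmem
    · intro u hu
      obtain ⟨σ, -, rfl⟩ := List.mem_map.mp hu
      rcases σ with b | b <;> cases b <;> simp [tl, tl', al, al']

lemma k_case (m : ℕ) (hm2 : 2 ≤ m) (p : ℕ) (q : ℤ) (hq : q ≠ 0) :
    IsAlgebraicSubset (fun b : Bool => (PresentedGroup.of b : BS m))
      {g : BS m | g * NF m p p q = NF m p p q * g} := by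
  refine ⟨kGrammar.language, ⟨_, rfl⟩, ?_⟩
  rw [image_eq]
  ext (g : BS m)
  show (∃ w : List BT, w ∈ _ ∧ πbs m (FreeMonoid.ofList w) = g) ↔ g * _ = _ * g
  constructor
  · rintro ⟨w, hw, rfl⟩
    have hcount := kGrammar_count hw
    have hker : φ m (πbs m (.ofList w)) = 1 := by
      rw [phi_count, hcount]; rfl
    obtain ⟨i, k, j, hnf⟩ := exists_nf (πbs m (FreeMonoid.ofList w))
    have hik : i = k := by
      rw [hnf, phi_nf] at hker
      have := congrArg Multiplicative.toAdd hker
      simp at this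
      omega
    rw [hnf, ← hik]
    exact (ker_comm i p j q).eq
  · intro hg
    obtain ⟨i, k, j, rfl⟩ := exists_nf g
    have hik : i = k := slope_one hm2 hq hg
    subst hik
    refine ⟨wordNF i i j, ?_, pi_wordNF i i j⟩
    rw [wordNF]
    exact kGrammar_mem i (aword j) (aword_letters j)

lemma cyclic_classify (m : ℕ) (hm2 : 2 ≤ m) (p r : ℕ) (q : ℤ) (hpr : p ≠ r) :
    ∃ g₀ : BS m, (g₀ * NF m p r q = NF m p r q * g₀) ∧
      ∀ g : BS m, g * NF m p r q = NF m p r q * g ↔ ∃ z : ℤ, g = g₀ ^ z := by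
  set x := NF m p r q with hx
  have ker_elim : ∀ h : BS m, h * x = x * h → φ m h = 1 → h = 1 := by
    intro h hcomm hker
    obtain ⟨i, k, j, rfl⟩ := exists_nf h
    have hik : i = k := by
      rw [phi_nf] at hker
      have := congrArg Multiplicative.toAdd hker
      simp at this
      omega
    subst hik
    have hj : j = 0 := ker_triv hm2 hpr hcomm
    rw [hj, nf_zero]
  set ZS : AddSubgroup ℤ :=
    { carrier := {n : ℤ | ∃ g : BS m, g * x = x * g ∧ φ m g = Multiplicative.ofAdd n}
      zero_mem' := ⟨1, by simp, by simp⟩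
      add_mem' := by
        rintro n1 n2 ⟨g1, hg1, hp1⟩ ⟨g2, hg2, hp2⟩
        refine ⟨g1 * g2, (Commute.mul_left hg1 hg2).eq, ?_⟩
        rw [map_mul, hp1, hp2, ← ofAdd_add]
      neg_mem' := by
        rintro n ⟨g, hg, hp⟩
        refine ⟨g⁻¹, (Commute.inv_left hg).eq, ?_⟩
        rw [map_inv, hp, ← ofAdd_neg] } with hZS
  obtain ⟨d, hd⟩ := Int.subgroup_cyclic ZS
  have hdmem : d ∈ ZS := by
    rw [hd]
    exact AddSubgroup.subset_closure (Set.mem_singleton d)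
  obtain ⟨g₀, hg₀c, hg₀φ⟩ := hdmem
  refine ⟨g₀, hg₀c, fun g => ⟨?_, ?_⟩⟩
  · intro hg
    have h1 : Multiplicative.toAdd (φ m g) ∈ ZS := ⟨g, hg, rfl⟩
    rw [hd] at h1
    obtain ⟨z, hz⟩ := AddSubgroup.mem_closure_singleton.mp h1
    refine ⟨z, ?_⟩
    have hker : φ m (g * (g₀ ^ z)⁻¹) = 1 := by
      rw [map_mul, map_inv, map_zpow, hg₀φ, ← ofAdd_zsmul]
      rw [hz]
      simp
    have hcomm' : (g * (g₀ ^ z)⁻¹) * x = x * (g * (g₀ ^ z)⁻¹) :=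
      (Commute.mul_left hg ((Commute.zpow_left hg₀c z).inv_left)).eq
    have := ker_elim _ hcomm' hker
    rw [mul_inv_eq_one] at this
    exact this
  · rintro ⟨z, rfl⟩
    exact (Commute.zpow_left hg₀c z).eq

lemma cyc_case (m : ℕ) (x : BS m) (g₀ : BS m)
    (hiff : ∀ g : BS m, g * x = x * g ↔ ∃ z : ℤ, g = g₀ ^ z) :
    IsAlgebraicSubset (fun b : Bool => (PresentedGroup.of b : BS m))
      {g : BS m | g * x = x * g} := by
  obtain ⟨i0, k0, j0, hg0⟩ := exists_nf g₀
  have hg0' : πbs m (.ofList (wordNF i0 k0 j0)) = g₀ := by rw [pi_wordNF, hg0]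
  have hg0inv : πbs m (.ofList (wordNF k0 i0 (-j0))) = g₀⁻¹ := by
    rw [pi_wordNF, hg0, NF, NF]
    group
  refine ⟨(starGrammar [wordNF i0 k0 j0, wordNF k0 i0 (-j0)]).language, ⟨_, rfl⟩, ?_⟩
  rw [image_eq]
  ext (g : BS m)
  show (∃ w : List BT, w ∈ _ ∧ πbs m (FreeMonoid.ofList w) = g) ↔ g * _ = _ * g
  constructor
  · rintro ⟨w, hw, rfl⟩
    obtain ⟨l, hl, rfl⟩ := starGrammar_lang _ hw
    refine pi_join_comm x l ?_
    intro u hu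
    have hu' := hl u hu
    simp only [List.mem_cons, List.mem_singleton, List.not_mem_nil, or_false] at hu'
    rcases hu' with rfl | rfl
    · rw [hg0']
      exact (hiff g₀).mpr ⟨1, by simp⟩
    · rw [hg0inv]
      exact (hiff g₀⁻¹).mpr ⟨-1, by simp⟩
  · intro hg
    obtain ⟨z, rfl⟩ := (hiff g).mp hg
    rcases le_or_gt 0 z with hz | hz
    · refine ⟨(List.replicate z.toNat (wordNF i0 k0 j0)).flatten,
        starGrammar_mem _ _ ?_, ?_⟩
      · intro u hu
        rw [List.eq_of_mem_replicate hu]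
        simp
      · rw [pi_join_pow, hg0', ← zpow_natCast, Int.toNat_of_nonneg hz]
    · refine ⟨(List.replicate (-z).toNat (wordNF k0 i0 (-j0))).flatten,
        starGrammar_mem _ _ ?_, ?_⟩
      · intro u hu
        rw [List.eq_of_mem_replicate hu]
        simp
      · rw [pi_join_pow, hg0inv, ← zpow_natCast, Int.toNat_of_nonneg (by omega)]
        group

end BSaux


open BSaux

/-- In `BS(1, m)` with `m ≥ 1`, the centralizer of every element is an algebraic subset,
with respect to the canonical generating map sending `true ↦ a`, `false ↦ t`. -/
theorem centralizer_isAlgebraic_BS (m : ℕ) (hm : 1 ≤ m) (x : BS m) :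
    IsAlgebraicSubset (fun b : Bool => (PresentedGroup.of b : BS m))
      {g : BS m | g * x = x * g} := by
  classical
  rcases Nat.lt_or_ge m 2 with hm1 | hm2
  · have hm' : m = 1 := by omega
    subst hm'
    exact top_case 1 x (fun g => bs_one_comm g x)
  · by_cases hx : x = 1
    · subst hx
      exact top_case m 1 (fun g => by group)
    · obtain ⟨p, r, q, hx'⟩ := exists_nf x
      by_cases hpr : p = r
      · subst hpr
        subst hx'
        have hq : q ≠ 0 := by
          intro h0
          rw [h0, nf_zero] at hx
          exact hx rfl
        exact k_case m hm2 p q hq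
      · subst hx'
        obtain ⟨g₀, -, hiff⟩ := cyclic_classify m hm2 p r q hpr
        exact cyc_case m _ g₀ hiff
end

section
/- Let m ≥ 1 and let BS(1, m) = ⟨a, t ∣ t⁻¹ a t = aᵐ⟩. Then the normal closure N of a in BS(1, m) is an algebraic subset of BS(1, m). -/
namespace BSProof

abbrev Al : Type := Bool ⊕ Bool

/-- Weight (t-exponent) of a letter. -/
def c : Al → ℤ
  | Sum.inl b => if b then 0 else 1
  | Sum.inr b => if b then 0 else -1

open Symbol in
/-- Grammar for words with zero total t-exponent. -/
def bsG : ContextFreeGrammar Al where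
  NT := Unit
  initial := ()
  rules :=
    { ⟨(), []⟩,
      ⟨(), [terminal (Sum.inl true), nonterminal ()]⟩,
      ⟨(), [terminal (Sum.inr true), nonterminal ()]⟩,
      ⟨(), [terminal (Sum.inl false), nonterminal (), terminal (Sum.inr false), nonterminal ()]⟩,
      ⟨(), [terminal (Sum.inr false), nonterminal (), terminal (Sum.inl false), nonterminal ()]⟩ }

lemma mem_bsG_rules {r : ContextFreeRule Al Unit} : r ∈ bsG.rules ↔
    r = ⟨(), []⟩ ∨ r = ⟨(), [Symbol.terminal (Sum.inl true), Symbol.nonterminal ()]⟩ ∨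
      r = ⟨(), [Symbol.terminal (Sum.inr true), Symbol.nonterminal ()]⟩ ∨
      r = ⟨(), [Symbol.terminal (Sum.inl false), Symbol.nonterminal (), Symbol.terminal (Sum.inr false),
        Symbol.nonterminal ()]⟩ ∨
      r = ⟨(), [Symbol.terminal (Sum.inr false), Symbol.nonterminal (), Symbol.terminal (Sum.inl false),
        Symbol.nonterminal ()]⟩ := by
  show r ∈ ({ ⟨(), []⟩,
        ⟨(), [Symbol.terminal (Sum.inl true), Symbol.nonterminal ()]⟩,
        ⟨(), [Symbol.terminal (Sum.inr true), Symbol.nonterminal ()]⟩,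
        ⟨(), [Symbol.terminal (Sum.inl false), Symbol.nonterminal (), Symbol.terminal (Sum.inr false),
          Symbol.nonterminal ()]⟩,
        ⟨(), [Symbol.terminal (Sum.inr false), Symbol.nonterminal (), Symbol.terminal (Sum.inl false),
          Symbol.nonterminal ()]⟩ } : Finset (ContextFreeRule Al Unit)) ↔ _
  simp only [Finset.mem_insert, Finset.mem_singleton]

def wt : Symbol Al Unit → ℤ
  | Symbol.terminal x => c x
  | Symbol.nonterminal _ => 0

lemma wt_sound {u v : List (Symbol Al Unit)} (h : bsG.Derives u v) :
    (v.map wt).sum = (u.map wt).sum := by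
  induction h with
  | refl => rfl
  | tail _ hp ih =>
    obtain ⟨r, hr, hrw⟩ := hp
    obtain ⟨p, q, hu, hv⟩ := hrw.exists_parts
    have hout : (r.output.map wt).sum = 0 ∧ wt (Symbol.nonterminal r.input) = 0 := by
      replace hr := mem_bsG_rules.mp hr
      rcases hr with rfl | rfl | rfl | rfl | rfl <;> simp [wt, c]
    rw [hu] at ih
    rw [hv]
    have key : ∀ (p q : List (Symbol Al Unit)) (r : ContextFreeRule Al Unit),
        (r.output.map wt).sum = 0 → wt (Symbol.nonterminal r.input) = 0 →
        ((p ++ r.output ++ q).map wt).sum = ((p ++ [Symbol.nonterminal r.input] ++ q).map wt).sum := by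
      intro p q r h1 h2
      simp only [List.map_append, List.sum_append, List.map_cons, List.sum_cons,
        List.map_nil, List.sum_nil]
      omega
    have hh1 := hout.1
    have hh2 := hout.2
    exact (key p q r hh1 hh2).trans ih

lemma sum_map_neg (d : Al → ℤ) (l : List Al) :
    (l.map fun x => -(d x)).sum = -((l.map d).sum) := by
  induction l with
  | nil => simp
  | cons x xs ih => simp [ih]; ring

/-- Split lemma: a word with negative total weight splits at a first letter of
weight `-1` with balanced prefix. -/
lemma split_neg (d : Al → ℤ) (hd : ∀ x, d x = -1 ∨ d x = 0 ∨ d x = 1) :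
    ∀ (n : ℕ) (w : List Al), w.length ≤ n → (w.map d).sum < 0 →
      ∃ w1 y w2, w = w1 ++ y :: w2 ∧ d y = -1 ∧ (w1.map d).sum = 0 ∧
        (w2.map d).sum = (w.map d).sum + 1 := by
  intro n
  induction n with
  | zero =>
    intro w hw hs
    rw [List.length_eq_zero_iff.mp (Nat.le_zero.mp hw)] at hs
    simp at hs
  | succ n ih =>
    rintro (_ | ⟨z, rest⟩) hw hs
    · simp at hs
    · have hlen : rest.length ≤ n := by simpa using hw
      simp only [List.map_cons, List.sum_cons] at hs
      rcases hd z with h | h | h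
      · exact ⟨[], z, rest, rfl, h, by simp, by simp; omega⟩
      · obtain ⟨r1, y, r2, hre, hy, h1, h2⟩ := ih rest hlen (by omega)
        refine ⟨z :: r1, y, r2, by simp [hre], hy, by simp [h1, h], ?_⟩
        rw [h2]; simp [hre, h]
      · obtain ⟨r1, y, r2, hre, hy, h1, h2⟩ := ih rest hlen (by omega)
        have hr2len : r2.length ≤ n := by
          have := congrArg List.length hre
          simp at this; omega
        have hr2sum : (r2.map d).sum < 0 := by
          rw [h2]; omega
        obtain ⟨s1, y', s2, hse, hy', hs1, hs2⟩ := ih r2 hr2len hr2sum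
        refine ⟨z :: r1 ++ y :: s1, y', s2, ?_, hy', ?_, ?_⟩
        · rw [hre, hse]; simp
        · simp [h1, hy, hs1, h]
        · rw [hs2, h2]; simp only [List.map_cons, List.sum_cons, h]; omega


open Symbol

lemma derive_eps : bsG.Derives [nonterminal ()] [] :=
  ContextFreeGrammar.Produces.single
    ⟨⟨(), []⟩, mem_bsG_rules.mpr (Or.inl rfl), ContextFreeRule.Rewrites.input_output⟩

lemma derive_single (x : Al)
    (hmem : (⟨(), [terminal x, nonterminal ()]⟩ : ContextFreeRule Al Unit) ∈ bsG.rules)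
    {v : List Al} (d : bsG.Derives [nonterminal ()] (v.map terminal)) :
    bsG.Derives [nonterminal ()] ((x :: v).map terminal) := by
  have p0 : bsG.Produces [nonterminal ()] [terminal x, nonterminal ()] :=
    ⟨_, hmem, ContextFreeRule.Rewrites.input_output⟩
  have s1 := d.append_left [terminal x]
  exact p0.trans_derives (by simpa using s1)

lemma derive_pair (x y : Al)
    (hmem : (⟨(), [terminal x, nonterminal (), terminal y, nonterminal ()]⟩ :
      ContextFreeRule Al Unit) ∈ bsG.rules)
    {v1 v2 : List Al}
    (d1 : bsG.Derives [nonterminal ()] (v1.map terminal))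
    (d2 : bsG.Derives [nonterminal ()] (v2.map terminal)) :
    bsG.Derives [nonterminal ()] ((x :: (v1 ++ y :: v2)).map terminal) := by
  have p0 : bsG.Produces [nonterminal ()]
      [terminal x, nonterminal (), terminal y, nonterminal ()] :=
    ⟨_, hmem, ContextFreeRule.Rewrites.input_output⟩
  have s1 : bsG.Derives [terminal x, nonterminal (), terminal y, nonterminal ()]
      (terminal x :: (v1.map terminal ++ [terminal y, nonterminal ()])) :=
    (d1.append_right [terminal y, nonterminal ()]).append_left [terminal x]
  have s2 : bsG.Derives (terminal x :: (v1.map terminal ++ [terminal y, nonterminal ()]))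
      (terminal x :: (v1.map terminal ++ (terminal y :: v2.map terminal))) :=
    ((d2.append_left [terminal y]).append_left (v1.map terminal)).append_left [terminal x]
  rw [List.map_cons, List.map_append, List.map_cons]
  exact p0.trans_derives (s1.trans s2)

lemma complete : ∀ (n : ℕ) (w : List Al), w.length ≤ n → (w.map c).sum = 0 →
    bsG.Derives [nonterminal ()] (w.map terminal) := by
  intro n
  induction n with
  | zero =>
    intro w hw _
    rw [List.length_eq_zero_iff.mp (Nat.le_zero.mp hw)]
    exact derive_eps
  | succ n ih =>
    rintro (_ | ⟨x, v⟩) hw hs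
    · exact derive_eps
    · have hlen : v.length ≤ n := by simpa using hw
      simp only [List.map_cons, List.sum_cons] at hs
      have hc : c x = -1 ∨ c x = 0 ∨ c x = 1 := by
        rcases x with b | b <;> cases b <;> simp [c]
      rcases hc with h | h | h
      · -- x = Sum.inr false : weight -1
        have hx : x = Sum.inr false := by
          rcases x with b | b <;> cases b <;> first | rfl | simp [c] at h
        have hneg : (v.map fun z => -(c z)).sum < 0 := by rw [sum_map_neg]; omega
        obtain ⟨v1, y, v2, hve, hy, h1, h2⟩ := split_neg (fun z => -(c z))
          (by intro z; rcases z with b | b <;> cases b <;> simp [c]) n v hlen hneg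
        rw [sum_map_neg] at h1 h2
        rw [sum_map_neg] at h2
        have hy' : c y = 1 := by omega
        have hyy : y = Sum.inl false := by
          rcases y with b | b <;> cases b <;> first | rfl | simp [c] at hy'
        have hl1 : v1.length ≤ n := by
          have := congrArg List.length hve; simp at this; omega
        have hl2 : v2.length ≤ n := by
          have := congrArg List.length hve; simp at this; omega
        have hs1 : (v1.map c).sum = 0 := by omega
        have hs2 : (v2.map c).sum = 0 := by
          have hv : (v.map c).sum = 1 := by omega
          omega
        subst hx hyy hve
        exact derive_pair _ _ (mem_bsG_rules.mpr (by simp)) (ih v1 hl1 hs1) (ih v2 hl2 hs2)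
      · -- weight 0
        have hds : bsG.Derives [nonterminal ()] (v.map terminal) :=
          ih v hlen (by omega)
        have hx : x = Sum.inl true ∨ x = Sum.inr true := by
          rcases x with b | b <;> cases b <;>
            first | (left; rfl) | (right; rfl) | simp [c] at h
        rcases hx with rfl | rfl
        · exact derive_single _ (mem_bsG_rules.mpr (by simp)) hds
        · exact derive_single _ (mem_bsG_rules.mpr (by simp)) hds
      · -- x = Sum.inl false : weight 1
        have hx : x = Sum.inl false := by
          rcases x with b | b <;> cases b <;> first | rfl | simp [c] at h
        obtain ⟨v1, y, v2, hve, hy, h1, h2⟩ := split_neg c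
          (by intro z; rcases z with b | b <;> cases b <;> simp [c]) n v hlen (by omega)
        have hyy : y = Sum.inr false := by
          rcases y with b | b <;> cases b <;> first | rfl | simp [c] at hy
        have hl1 : v1.length ≤ n := by
          have := congrArg List.length hve; simp at this; omega
        have hl2 : v2.length ≤ n := by
          have := congrArg List.length hve; simp at this; omega
        have hs2 : (v2.map c).sum = 0 := by omega
        subst hx hyy hve
        exact derive_pair _ _ (mem_bsG_rules.mpr (by simp)) (ih v1 hl1 h1) (ih v2 hl2 hs2)

lemma mem_lang_iff (w : List Al) : w ∈ bsG.language ↔ (w.map c).sum = 0 := by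
  constructor
  · intro h
    have := wt_sound h
    have e : ∀ w : List Al, ((w.map (Symbol.terminal (N := Unit))).map wt).sum = (w.map c).sum := by
      intro w; induction w <;> simp [wt, Function.comp_def, *]
    exact (e w).symm.trans this
  · intro h
    exact complete w.length w le_rfl h


variable (m : ℕ)

def phi : PresentedGroup (BSRels m) →* Multiplicative ℤ :=
  PresentedGroup.toGroup
    (f := fun b : Bool => if b then (1 : Multiplicative ℤ) else Multiplicative.ofAdd 1)
    (by
      intro r hr
      simp only [BSRels, Set.mem_singleton_iff] at hr
      subst hr
      simp)

lemma phi_of (b : Bool) :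
    phi m (PresentedGroup.of b) = if b then 1 else Multiplicative.ofAdd 1 :=
  PresentedGroup.toGroup.of _

lemma N_le_ker :
    Subgroup.normalClosure {(PresentedGroup.of true : BS m)} ≤ (phi m).ker :=
  Subgroup.normalClosure_le_normal (by
    rw [Set.singleton_subset_iff, SetLike.mem_coe, MonoidHom.mem_ker]
    exact phi_of m true)

lemma ker_le_N :
    (phi m).ker ≤ Subgroup.normalClosure {(PresentedGroup.of true : BS m)} := by
  set N := Subgroup.normalClosure {(PresentedGroup.of true : BS m)} with hN
  intro g hg
  have key : ∀ h : BS m, (QuotientGroup.mk' N) h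
      = zpowersHom _ ((QuotientGroup.mk' N) (PresentedGroup.of false)) (phi m h) := by
    intro h
    obtain ⟨x, rfl⟩ := PresentedGroup.mk_surjective (BSRels m) h
    induction x using FreeGroup.induction_on with
    | C1 => simp
    | of b =>
      have hid : (PresentedGroup.mk (BSRels m)) (FreeGroup.of b) = PresentedGroup.of b := rfl
      rw [hid, phi_of]
      cases b
      · rw [if_neg (by simp), zpowersHom_apply]
        simp
      · have ha : (PresentedGroup.of true : BS m) ∈ N :=
          Subgroup.subset_normalClosure rfl
        rw [if_pos rfl, map_one]
        exact (QuotientGroup.eq_one_iff _).mpr ha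
    | inv_of b ih =>
      simp only [map_inv, ih]
    | mul x y ihx ihy =>
      simp only [map_mul, ihx, ihy]
  have h1 := key g
  rw [MonoidHom.mem_ker] at hg
  rw [hg, map_one] at h1
  exact (QuotientGroup.eq_one_iff g).mp h1

lemma phi_pi (w : List Al) :
    phi m (wordHom (fun b : Bool => (PresentedGroup.of b : BS m)) (FreeMonoid.ofList w))
      = Multiplicative.ofAdd ((w.map c).sum) := by
  induction w with
  | nil => simp
  | cons x v ih =>
    rw [FreeMonoid.ofList_cons, map_mul, map_mul, ih]
    have hx : phi m (wordHom (fun b : Bool => (PresentedGroup.of b : BS m))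
        (FreeMonoid.of x)) = Multiplicative.ofAdd (c x) := by
      rcases x with b | b <;> cases b <;>
        simp [wordHom, phi_of, c, ofAdd_neg]
    rw [hx, List.map_cons, List.sum_cons, ofAdd_add]

lemma pi_surj (g : BS m) : ∃ w : List Al,
    wordHom (fun b : Bool => (PresentedGroup.of b : BS m)) (FreeMonoid.ofList w) = g := by
  obtain ⟨x, rfl⟩ := PresentedGroup.mk_surjective (BSRels m) g
  induction x using FreeGroup.induction_on with
  | C1 => exact ⟨[], by simp [wordHom]⟩
  | of b => exact ⟨[Sum.inl b], by simp [wordHom]; rfl⟩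
  | inv_of b _ => exact ⟨[Sum.inr b], by simp [wordHom]; rfl⟩
  | mul x y ihx ihy =>
    obtain ⟨w1, h1⟩ := ihx
    obtain ⟨w2, h2⟩ := ihy
    exact ⟨w1 ++ w2, by rw [FreeMonoid.ofList_append, map_mul, h1, h2, map_mul]⟩

end BSProof

/-- In `BS(1, m)` with `m ≥ 1`, the normal closure of `a` is an algebraic subset,
with respect to the canonical generating map sending `true ↦ a`, `false ↦ t`. -/
theorem normalClosure_isAlgebraic_BS (m : ℕ) (hm : 1 ≤ m) :
    IsAlgebraicSubset (fun b : Bool => (PresentedGroup.of b : BS m))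
      ((Subgroup.normalClosure {(PresentedGroup.of true : BS m)} : Subgroup (BS m)) :
        Set (BS m)) := by
  refine ⟨BSProof.bsG.language, ⟨BSProof.bsG, rfl⟩, ?_⟩
  ext g
  constructor
  · rintro ⟨w, hw, rfl⟩
    have hsum : (w.map BSProof.c).sum = 0 := (BSProof.mem_lang_iff w).mp hw
    apply BSProof.ker_le_N m
    rw [MonoidHom.mem_ker, BSProof.phi_pi, hsum]
    rfl
  · intro hg
    obtain ⟨w, hw⟩ := BSProof.pi_surj m g
    have h1 : BSProof.phi m g = 1 := BSProof.N_le_ker m hg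
    have h2 : Multiplicative.ofAdd ((w.map BSProof.c).sum) = 1 := by
      rw [← BSProof.phi_pi, hw, h1]
    exact ⟨w, (BSProof.mem_lang_iff w).mpr (ofAdd_eq_one.mp h2), hw⟩
end

section
/- Let G be a group generated by a finite set, let x ∈ G, and let φ : G → G be an injective group endomorphism. Then the orbit of x through φ, Orb_φ(x) = {φᵏ(x) : k ∈ ℕ}, viewed inside the ascending HNN-extension G∗_φ via the canonical embedding of : G → G∗_φ, is an algebraic subset of G∗_φ (which is itself generated by the finite set consisting of the images of the generators of G together with the stable letter t). -/
/-- The ascending HNN-extension `G∗_φ` of a group `G` along an injective endomorphism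
`φ : G → G`: the HNN extension of `G` with associated subgroups `φ.range` and `⊤`, with
the isomorphism `φ.range ≃* ⊤` induced by `φ`, so that the defining relation is
`t⁻¹ g t = φ g` for all `g ∈ G` (`of : G → G∗_φ` is the canonical embedding and `t` the
stable letter). -/
noncomputable abbrev AscendingHNN {G : Type} [Group G] (φ : G →* G)
    (hφ : Function.Injective φ) : Type :=
  HNNExtension G φ.range ⊤ ((Subgroup.topEquiv.trans (MonoidHom.ofInjective hφ)).symm)

/-! ### Auxiliary lemmas -/

section Aux

lemma aux_replicate_cons {α : Type} (x : α) (n : ℕ) (l : List α) :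
    x :: (List.replicate n x ++ l) = List.replicate n x ++ x :: l := by
  induction n with
  | zero => simp
  | succ m ih => simp [List.replicate_succ, ih]

/-- Uniqueness of splitting at an element not occurring elsewhere. -/
lemma aux_split_unique {α : Type} {c : α} :
    ∀ {p q p' q' : List α}, c ∉ p → c ∉ q →
      p ++ c :: q = p' ++ c :: q' → p = p' ∧ q = q' := by
  intro p
  induction p with
  | nil =>
    intro q p' q' _ hq h
    cases p' with
    | nil => simpa using h
    | cons y ys =>
      exfalso
      simp only [List.nil_append, List.cons_append, List.cons.injEq] at h
      exact hq (h.2 ▸ List.mem_append_right _ (h.1 ▸ List.mem_cons_self))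
  | cons z zs ih =>
    intro q p' q' hp hq h
    cases p' with
    | nil =>
      exfalso
      simp only [List.nil_append, List.cons_append, List.cons.injEq] at h
      exact hp (h.1 ▸ List.mem_cons_self)
    | cons y ys =>
      simp only [List.cons_append, List.cons.injEq] at h
      obtain ⟨rfl, h2⟩ := h
      have := ih (fun hc => hp (List.mem_cons_of_mem _ hc)) hq h2
      exact ⟨by rw [this.1], this.2⟩

variable {T : Type} (a b : T) (w : List T)

/-- The grammar `Z → a Z b | w`. -/
noncomputable abbrev pumpGrammar : ContextFreeGrammar T :=
  letI := Classical.decEq (ContextFreeRule T Unit)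
  ⟨Unit, (),
    {⟨(), [Symbol.terminal a, Symbol.nonterminal (), Symbol.terminal b]⟩,
     ⟨(), w.map Symbol.terminal⟩}⟩

lemma pumpGrammar_mem_rules {r : ContextFreeRule T Unit} :
    r ∈ (pumpGrammar a b w).rules ↔
      r = ⟨(), [Symbol.terminal a, Symbol.nonterminal (), Symbol.terminal b]⟩ ∨
      r = ⟨(), w.map Symbol.terminal⟩ := by
  classical
  simp [pumpGrammar]

lemma pumpGrammar_derives_aux (k : ℕ) :
    (pumpGrammar a b w).Derives [Symbol.nonterminal ()]
      (List.replicate k (Symbol.terminal a) ++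
        Symbol.nonterminal () :: List.replicate k (Symbol.terminal b)) := by
  induction k with
  | zero => simpa using ContextFreeGrammar.Derives.refl _
  | succ n ih =>
    refine ih.trans_produces ?_
    refine ⟨⟨(), [Symbol.terminal a, Symbol.nonterminal (), Symbol.terminal b]⟩,
      (pumpGrammar_mem_rules a b w).2 (Or.inl rfl), ?_⟩
    have h := ContextFreeRule.rewrites_of_exists_parts
      (⟨(), [Symbol.terminal a, Symbol.nonterminal (), Symbol.terminal b]⟩ :
        ContextFreeRule T Unit)
      (List.replicate n (Symbol.terminal a)) (List.replicate n (Symbol.terminal b))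
    have e1 : List.replicate n (Symbol.terminal a : Symbol T Unit) ++
        Symbol.nonterminal () :: List.replicate n (Symbol.terminal b) =
        List.replicate n (Symbol.terminal a) ++ [Symbol.nonterminal ()] ++
          List.replicate n (Symbol.terminal b) := by simp
    have e2 : List.replicate (n + 1) (Symbol.terminal a : Symbol T Unit) ++
        Symbol.nonterminal () :: List.replicate (n + 1) (Symbol.terminal b) =
        List.replicate n (Symbol.terminal a) ++
          [Symbol.terminal a, Symbol.nonterminal (), Symbol.terminal b] ++
          List.replicate n (Symbol.terminal b) := by
      simp [List.replicate_succ, ← aux_replicate_cons]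
    rw [e1, e2]
    exact h

lemma pumpGrammar_inv {u : List (Symbol T Unit)}
    (h : (pumpGrammar a b w).Derives [Symbol.nonterminal ()] u) :
    (∃ k : ℕ, u = List.replicate k (Symbol.terminal a) ++
        Symbol.nonterminal () :: List.replicate k (Symbol.terminal b)) ∨
    (∃ k : ℕ, u = List.replicate k (Symbol.terminal a) ++
        w.map Symbol.terminal ++ List.replicate k (Symbol.terminal b)) := by
  induction h with
  | refl => exact Or.inl ⟨0, by simp⟩
  | tail _ hprod ih =>
    obtain ⟨r, hr, hrw⟩ := hprod
    obtain ⟨p, q, hu, hv⟩ := hrw.exists_parts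
    rcases ih with ⟨k, rfl⟩ | ⟨k, rfl⟩
    · have hnp : Symbol.nonterminal () ∉ List.replicate k (Symbol.terminal a : Symbol T Unit) := by
        intro hc; simpa using List.eq_of_mem_replicate hc
      have hnq : Symbol.nonterminal () ∉ List.replicate k (Symbol.terminal b : Symbol T Unit) := by
        intro hc; simpa using List.eq_of_mem_replicate hc
      have hin : Symbol.nonterminal r.input = (Symbol.nonterminal () : Symbol T Unit) := rfl
      rw [List.append_assoc, List.singleton_append, hin] at hu
      obtain ⟨hp, hq⟩ := aux_split_unique hnp hnq hu
      subst hv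
      rcases (pumpGrammar_mem_rules a b w).1 hr with rfl | rfl
      · refine Or.inl ⟨k + 1, ?_⟩
        rw [← hp, ← hq]
        simp [List.replicate_succ, ← aux_replicate_cons]
      · refine Or.inr ⟨k, ?_⟩
        rw [← hp, ← hq]
    · exfalso
      have : Symbol.nonterminal r.input ∈ List.replicate k (Symbol.terminal a : Symbol T Unit) ++
          w.map Symbol.terminal ++ List.replicate k (Symbol.terminal b) := by
        rw [hu]; exact List.mem_append_left _ (List.mem_append_right _ (by simp))
      rcases List.mem_append.1 this with h' | h'
      · rcases List.mem_append.1 h' with h'' | h''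
        · simpa using List.eq_of_mem_replicate h''
        · obtain ⟨s, -, hs⟩ := List.mem_map.1 h''
          simp at hs
      · simpa using List.eq_of_mem_replicate h'

lemma pump_isContextFree :
    Language.IsContextFree
      {u : List T | ∃ k : ℕ, u = List.replicate k a ++ w ++ List.replicate k b} := by
  refine ⟨pumpGrammar a b w, ?_⟩
  ext u
  rw [ContextFreeGrammar.mem_language_iff]
  constructor
  · intro h
    rcases pumpGrammar_inv a b w h with ⟨k, hk⟩ | ⟨k, hk⟩
    · exfalso
      have hmem : (Symbol.nonterminal () : Symbol T Unit) ∈ List.map Symbol.terminal u := by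
        rw [hk]; exact List.mem_append.2 (Or.inr (List.mem_cons_self))
      obtain ⟨s, -, hs⟩ := List.mem_map.1 hmem
      simp at hs
    · refine ⟨k, ?_⟩
      have hterm : Function.Injective (Symbol.terminal : T → Symbol T Unit) := by
        intro s s' hss'; injection hss'
      refine List.map_injective_iff.2 hterm ?_
      rw [hk]; simp
  · rintro ⟨k, rfl⟩
    refine (pumpGrammar_derives_aux a b w k).trans_produces
      ⟨⟨(), w.map Symbol.terminal⟩, (pumpGrammar_mem_rules a b w).2 (Or.inr rfl), ?_⟩
    have h := ContextFreeRule.rewrites_of_exists_parts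
      (⟨(), w.map Symbol.terminal⟩ : ContextFreeRule T Unit)
      (List.replicate k (Symbol.terminal a)) (List.replicate k (Symbol.terminal b))
    have e1 : List.replicate k (Symbol.terminal a : Symbol T Unit) ++
        Symbol.nonterminal () :: List.replicate k (Symbol.terminal b) =
        List.replicate k (Symbol.terminal a) ++ [Symbol.nonterminal ()] ++
          List.replicate k (Symbol.terminal b) := by simp
    have e2 : List.map (Symbol.terminal : T → Symbol T Unit)
        (List.replicate k a ++ w ++ List.replicate k b) =
        List.replicate k (Symbol.terminal a) ++ w.map Symbol.terminal ++
          List.replicate k (Symbol.terminal b) := by simp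
    rw [e1, e2]
    exact h

end Aux

/-- Let `G` be a group generated by a finite set (given by `f : X → G`), `x ∈ G` and `φ`
an injective endomorphism of `G`. Then the orbit `{φᵏ(x) : k ∈ ℕ}` of `x` through `φ`,
viewed inside the ascending HNN-extension `G∗_φ` via the canonical embedding, is an
algebraic subset of `G∗_φ` with respect to the finite generating set consisting of the
images of the generators of `G` together with the stable letter `t`. -/
theorem orbit_isAlgebraic_ascendingHNN {X G : Type} [Fintype X] [Group G] (f : X → G)
    (hgen : Subgroup.closure (Set.range f) = ⊤)
    (x : G) (φ : G →* G) (hφ : Function.Injective φ) :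
    IsAlgebraicSubset
      (Sum.elim (fun y : X => (HNNExtension.of (f y) : AscendingHNN φ hφ))
        (fun _ : Unit => (HNNExtension.t : AscendingHNN φ hφ)))
      (HNNExtension.of '' (Set.range fun k : ℕ => (⇑φ)^[k] x)) := by
  classical
  set F : X ⊕ Unit → AscendingHNN φ hφ :=
    Sum.elim (fun y : X => (HNNExtension.of (f y) : AscendingHNN φ hφ))
      (fun _ : Unit => (HNNExtension.t : AscendingHNN φ hφ)) with hF
  -- the conjugation relation `of (φ g) = t⁻¹ * of g * t`
  have hconj : ∀ g : G, (HNNExtension.of (φ g) : AscendingHNN φ hφ) =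
      HNNExtension.t⁻¹ * HNNExtension.of g * HNNExtension.t := by
    intro g
    have h := HNNExtension.equiv_symm_eq_conj (G := G) (A := φ.range) (B := (⊤ : Subgroup G))
      (φ := (Subgroup.topEquiv.trans (MonoidHom.ofInjective hφ)).symm)
      ⟨g, Subgroup.mem_top g⟩
    simpa [MonoidHom.ofInjective_apply] using h
  -- inverses of words
  have hinv : ∀ w : List (X ⊕ X),
      wordHom f (FreeMonoid.ofList ((w.map Sum.swap).reverse)) =
        (wordHom f (FreeMonoid.ofList w))⁻¹ := by
    intro w
    induction w with
    | nil => simp [wordHom]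
    | cons c wtl ih =>
      have h1 : ((c :: wtl).map Sum.swap).reverse =
          (wtl.map Sum.swap).reverse ++ [Sum.swap c] := by simp
      have h2 : FreeMonoid.ofList (c :: wtl) =
          FreeMonoid.of c * FreeMonoid.ofList wtl := rfl
      rw [h1, FreeMonoid.ofList_append, map_mul, ih, h2, map_mul, mul_inv_rev]
      congr 1
      cases c <;> simp [wordHom, FreeMonoid.ofList_singleton]
  -- every element of `G` is represented by a word
  have hword : ∃ w : List (X ⊕ X), wordHom f (FreeMonoid.ofList w) = x := by
    have hx : x ∈ Subgroup.closure (Set.range f) := hgen ▸ Subgroup.mem_top x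
    refine Subgroup.closure_induction ?_ ?_ ?_ ?_ hx
    · rintro g ⟨y, rfl⟩ ; exact ⟨[Sum.inl y], by simp [wordHom, FreeMonoid.ofList_singleton]⟩
    · exact ⟨[], by simp [wordHom]⟩
    · rintro g g' - - ⟨w1, rfl⟩ ⟨w2, rfl⟩
      exact ⟨w1 ++ w2, by rw [FreeMonoid.ofList_append, map_mul]⟩
    · rintro g - ⟨w1, rfl⟩
      exact ⟨(w1.map Sum.swap).reverse, hinv w1⟩
  obtain ⟨wx, hwx⟩ := hword
  -- lifting words from `G` to the HNN extension
  have hlift : ∀ w : List (X ⊕ X),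
      wordHom F (FreeMonoid.ofList (w.map (Sum.map Sum.inl Sum.inl))) =
        HNNExtension.of (wordHom f (FreeMonoid.ofList w)) := by
    intro w
    induction w with
    | nil => simp [wordHom]
    | cons c wtl ih =>
      have h1 : FreeMonoid.ofList
          (((c :: wtl).map (Sum.map Sum.inl Sum.inl)) : List ((X ⊕ Unit) ⊕ (X ⊕ Unit))) =
          FreeMonoid.of (Sum.map Sum.inl Sum.inl c) *
            FreeMonoid.ofList (wtl.map (Sum.map Sum.inl Sum.inl)) := rfl
      have h2 : FreeMonoid.ofList (c :: wtl) =
          FreeMonoid.of c * FreeMonoid.ofList wtl := rfl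
      rw [h1, h2, map_mul, map_mul, ih, map_mul]
      congr 1
      cases c <;> simp [wordHom, hF]
  -- the two special letters
  set Tinv : (X ⊕ Unit) ⊕ (X ⊕ Unit) := Sum.inr (Sum.inr ()) with hTinv
  set Tlet : (X ⊕ Unit) ⊕ (X ⊕ Unit) := Sum.inl (Sum.inr ()) with hTlet
  set W : List ((X ⊕ Unit) ⊕ (X ⊕ Unit)) := wx.map (Sum.map Sum.inl Sum.inl) with hW
  have hrep : ∀ k : ℕ,
      wordHom F (FreeMonoid.ofList
        (List.replicate k Tinv ++ W ++ List.replicate k Tlet)) =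
        HNNExtension.of ((⇑φ)^[k] x) := by
    intro k
    induction k with
    | zero => simpa using (hlift wx).trans (by rw [hwx])
    | succ n ih =>
      have hsplit : List.replicate (n + 1) Tinv ++ W ++ List.replicate (n + 1) Tlet =
          [Tinv] ++ (List.replicate n Tinv ++ W ++ List.replicate n Tlet) ++ [Tlet] := by
        rw [show List.replicate (n + 1) Tinv = Tinv :: List.replicate n Tinv from
            List.replicate_succ .. ,
          show List.replicate (n + 1) Tlet = List.replicate n Tlet ++ [Tlet] from
            List.replicate_succ' ..]
        simp
      rw [hsplit, FreeMonoid.ofList_append, FreeMonoid.ofList_append, map_mul, map_mul, ih,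
        Function.iterate_succ_apply', hconj]
      have hT1 : wordHom F (FreeMonoid.ofList [Tinv]) = HNNExtension.t⁻¹ := by
        simp [wordHom, FreeMonoid.ofList_singleton, hTinv, hF]
      have hT2 : wordHom F (FreeMonoid.ofList [Tlet]) = HNNExtension.t := by
        simp [wordHom, FreeMonoid.ofList_singleton, hTlet, hF]
      rw [hT1, hT2]
  refine ⟨{u | ∃ k : ℕ, u = List.replicate k Tinv ++ W ++ List.replicate k Tlet},
    pump_isContextFree Tinv Tlet W, ?_⟩
  ext h
  simp only [Set.mem_image, Set.mem_setOf_eq, Set.mem_range]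
  constructor
  · rintro ⟨u, ⟨k, rfl⟩, rfl⟩
    exact ⟨(⇑φ)^[k] x, ⟨k, rfl⟩, (hrep k).symm⟩
  · rintro ⟨g, ⟨k, rfl⟩, rfl⟩
    exact ⟨_, ⟨k, rfl⟩, hrep k⟩
end

section
/- Let G be a group generated by a finite set, let g ∈ G, and let φ be an automorphism of G. Form the semidirect product G ⋊_φ ℤ, where n ∈ ℤ acts on G by φⁿ. Then the orbit of g under the iteration of φ, {φⁿ(g) : n ∈ ℤ}, viewed inside G ⋊_φ ℤ via the canonical embedding of G, is an algebraic subset of G ⋊_φ ℤ (which is generated by the images of the generators of G together with the element t = (1, 1) ∈ G ⋊_φ ℤ, and one has t⁻ⁿ g tⁿ = φⁿ(g) for all n ∈ ℤ). -/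
namespace OrbitCF

variable {T : Type}

open ContextFreeGrammar

lemma split_unique {N : Type} {xs ys : List (Symbol T N)}
    (hx : ∀ s ∈ xs, ∃ t, s = Symbol.terminal t)
    (hy : ∀ s ∈ ys, ∃ t, s = Symbol.terminal t)
    {m n : N} {p q : List (Symbol T N)}
    (h : p ++ [Symbol.nonterminal n] ++ q = xs ++ [Symbol.nonterminal m] ++ ys) :
    p = xs ∧ n = m ∧ q = ys := by
  induction xs generalizing p with
  | nil =>
    cases p with
    | nil =>
      simp only [List.nil_append, List.singleton_append, List.cons.injEq] at h
      obtain ⟨h1, h2⟩ := h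
      exact ⟨rfl, Symbol.nonterminal.inj h1, h2⟩
    | cons s p' =>
      simp only [List.nil_append, List.singleton_append, List.cons_append,
        List.cons.injEq] at h
      obtain ⟨rfl, h2⟩ := h
      exfalso
      have : Symbol.nonterminal n ∈ ys := by
        rw [← h2]; simp
      obtain ⟨t, ht⟩ := hy _ this
      simp at ht
  | cons x xs' ih =>
    cases p with
    | nil =>
      simp only [List.nil_append, List.singleton_append, List.cons_append,
        List.cons.injEq] at h
      obtain ⟨h1, -⟩ := h
      obtain ⟨t, ht⟩ := hx x (by simp)
      rw [ht] at h1
      simp at h1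
    | cons s p' =>
      simp only [List.cons_append, List.cons.injEq] at h
      obtain ⟨rfl, h2⟩ := h
      obtain ⟨rfl, rfl, rfl⟩ := ih (fun s hs => hx s (by simp [hs])) h2
      exact ⟨rfl, rfl, rfl⟩

open Classical in
/-- Grammar generating `{aᵏ W bᵏ} ∪ {bᵏ W aᵏ}`. -/
@[reducible] noncomputable def conjGrammar (a b : T) (W : List T) : ContextFreeGrammar T :=
  ⟨Fin 3, 0,
    {⟨0, [.nonterminal 1]⟩, ⟨0, [.nonterminal 2]⟩,
     ⟨1, [.terminal a, .nonterminal 1, .terminal b]⟩, ⟨1, W.map .terminal⟩,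
     ⟨2, [.terminal b, .nonterminal 2, .terminal a]⟩, ⟨2, W.map .terminal⟩}⟩

variable (a b : T) (W : List T)

/-- Invariant on sentential forms of `conjGrammar`. -/
def Good (u : List (Symbol T (Fin 3))) : Prop :=
  u = [.nonterminal 0]
  ∨ (∃ k : ℕ, u = List.replicate k (.terminal a) ++ [.nonterminal 1]
      ++ List.replicate k (.terminal b))
  ∨ (∃ k : ℕ, u = List.replicate k (.terminal b) ++ [.nonterminal 2]
      ++ List.replicate k (.terminal a))
  ∨ (∃ k : ℕ, u = List.replicate k (.terminal a) ++ W.map .terminal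
      ++ List.replicate k (.terminal b))
  ∨ (∃ k : ℕ, u = List.replicate k (.terminal b) ++ W.map .terminal
      ++ List.replicate k (.terminal a))

lemma good_preserved {u v : List (Symbol T (Fin 3))} (hu : Good a b W u)
    (huv : (conjGrammar a b W).Produces u v) : Good a b W v := by
  obtain ⟨r, hr, hrw⟩ := huv
  obtain ⟨p, q, hpq, hv⟩ := hrw.exists_parts
  have hrcases : r = (⟨0, [.nonterminal 1]⟩ : ContextFreeRule T (Fin 3)) ∨
      r = (⟨0, [.nonterminal 2]⟩ : ContextFreeRule T (Fin 3)) ∨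
      r = (⟨1, [.terminal a, .nonterminal 1, .terminal b]⟩ : ContextFreeRule T (Fin 3)) ∨
      r = (⟨1, W.map .terminal⟩ : ContextFreeRule T (Fin 3)) ∨
      r = (⟨2, [.terminal b, .nonterminal 2, .terminal a]⟩ : ContextFreeRule T (Fin 3)) ∨
      r = (⟨2, W.map .terminal⟩ : ContextFreeRule T (Fin 3)) := by
    simpa [conjGrammar] using hr
  have hterm_rep : ∀ (c : T) (k : ℕ), ∀ s ∈ List.replicate k (Symbol.terminal c : Symbol T (Fin 3)),
      ∃ t, s = Symbol.terminal t := by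
    intro c k s hs
    rw [List.eq_of_mem_replicate hs]
    exact ⟨c, rfl⟩
  rcases hu with hu | ⟨k, hu⟩ | ⟨k, hu⟩ | ⟨k, hu⟩ | ⟨k, hu⟩
  · -- u = [nt 0]
    rw [hu] at hpq
    obtain ⟨rfl, hinput, rfl⟩ := split_unique (xs := ([] : List (Symbol T (Fin 3))))
      (ys := ([] : List (Symbol T (Fin 3)))) (by simp) (by simp) (m := (0 : Fin 3))
      (by simpa using hpq.symm)
    rcases hrcases with rfl | rfl | rfl | rfl | rfl | rfl
    · exact Or.inr (Or.inl ⟨0, by simpa using hv⟩)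
    · exact Or.inr (Or.inr (Or.inl ⟨0, by simpa using hv⟩))
    · simp at hinput
    · simp at hinput
    · simp at hinput
    · simp at hinput
  · -- u = aᵏ [nt 1] bᵏ
    rw [hu] at hpq
    obtain ⟨rfl, hinput, rfl⟩ := split_unique (hterm_rep a k) (hterm_rep b k) hpq.symm
    rcases hrcases with rfl | rfl | rfl | rfl | rfl | rfl
    · simp at hinput
    · simp at hinput
    · refine Or.inr (Or.inl ⟨k + 1, ?_⟩)
      rw [hv, List.replicate_succ', List.replicate_succ]
      simp
    · exact Or.inr (Or.inr (Or.inr (Or.inl ⟨k, hv⟩)))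
    · simp at hinput
    · simp at hinput
  · -- u = bᵏ [nt 2] aᵏ
    rw [hu] at hpq
    obtain ⟨rfl, hinput, rfl⟩ := split_unique (hterm_rep b k) (hterm_rep a k) hpq.symm
    rcases hrcases with rfl | rfl | rfl | rfl | rfl | rfl
    · simp at hinput
    · simp at hinput
    · simp at hinput
    · simp at hinput
    · refine Or.inr (Or.inr (Or.inl ⟨k + 1, ?_⟩))
      rw [hv, List.replicate_succ', List.replicate_succ]
      simp
    · exact Or.inr (Or.inr (Or.inr (Or.inr ⟨k, hv⟩)))
  · -- u = aᵏ W bᵏ : all terminals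
    exfalso
    have hmem : Symbol.nonterminal r.input ∈ List.replicate k (Symbol.terminal a : Symbol T (Fin 3))
        ++ W.map .terminal ++ List.replicate k (.terminal b) := by
      rw [← hu, hpq]
      exact List.mem_append.mpr (Or.inl (List.mem_append.mpr (Or.inr (by simp))))
    rcases List.mem_append.mp hmem with h | h
    · rcases List.mem_append.mp h with h | h
      · exact absurd (List.eq_of_mem_replicate h) (by simp)
      · obtain ⟨t, -, ht⟩ := List.mem_map.mp h; simp at ht
    · exact absurd (List.eq_of_mem_replicate h) (by simp)
  · exfalso
    have hmem : Symbol.nonterminal r.input ∈ List.replicate k (Symbol.terminal b : Symbol T (Fin 3))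
        ++ W.map .terminal ++ List.replicate k (.terminal a) := by
      rw [← hu, hpq]
      exact List.mem_append.mpr (Or.inl (List.mem_append.mpr (Or.inr (by simp))))
    rcases List.mem_append.mp hmem with h | h
    · rcases List.mem_append.mp h with h | h
      · exact absurd (List.eq_of_mem_replicate h) (by simp)
      · obtain ⟨t, -, ht⟩ := List.mem_map.mp h; simp at ht
    · exact absurd (List.eq_of_mem_replicate h) (by simp)

lemma good_of_derives {u : List (Symbol T (Fin 3))}
    (h : (conjGrammar a b W).Derives ([Symbol.nonterminal 0] : List (Symbol T (Fin 3))) u) : Good a b W u := by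
  induction h with
  | refl => exact Or.inl rfl
  | tail _ hp ih => exact good_preserved a b W ih hp

lemma derives_repA (n : Fin 3) (x y : T)
    (hr : (⟨n, [.terminal x, .nonterminal n, .terminal y]⟩ : ContextFreeRule T (Fin 3))
        ∈ (conjGrammar a b W).rules) :
    ∀ k : ℕ, (conjGrammar a b W).Derives ([Symbol.nonterminal n] : List (Symbol T (Fin 3)))
      (List.replicate k (.terminal x) ++ [.nonterminal n] ++ List.replicate k (.terminal y)) := by
  intro k
  induction k with
  | zero => simpa using ContextFreeGrammar.Derives.refl (g := conjGrammar a b W) [Symbol.nonterminal n]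
  | succ k ih =>
    refine ih.trans_produces ⟨_, hr, ?_⟩
    have heq : List.replicate (k+1) (Symbol.terminal x : Symbol T (Fin 3)) ++ [Symbol.nonterminal n]
        ++ List.replicate (k+1) (Symbol.terminal y) =
        List.replicate k (Symbol.terminal x) ++
          [Symbol.terminal x, Symbol.nonterminal n, Symbol.terminal y] ++
          List.replicate k (Symbol.terminal y) := by
      rw [List.replicate_succ', List.replicate_succ]
      simp
    rw [heq]
    exact ContextFreeRule.rewrites_of_exists_parts _ _ _

lemma lang_conjGrammar :
    (conjGrammar a b W).language =
    {u : List T | ∃ k : ℕ,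
      u = List.replicate k a ++ W ++ List.replicate k b ∨
      u = List.replicate k b ++ W ++ List.replicate k a} := by
  have hmapA : ∀ (x y : T) (k : ℕ),
      (List.map (Symbol.terminal : T → Symbol T (Fin 3))
        (List.replicate k x ++ W ++ List.replicate k y)) =
      List.replicate k (.terminal x) ++ W.map .terminal ++ List.replicate k (.terminal y) := by
    intro x y k
    simp [List.map_replicate]
  ext u
  constructor
  · intro hu
    have hg := good_of_derives a b W hu
    have hinj : Function.Injective (Symbol.terminal : T → Symbol T (Fin 3)) :=
      fun s t hst => Symbol.terminal.inj hst
    rcases hg with hg | ⟨k, hg⟩ | ⟨k, hg⟩ | ⟨k, hg⟩ | ⟨k, hg⟩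
    · exfalso
      have : (Symbol.nonterminal 0 : Symbol T (Fin 3)) ∈ List.map .terminal u := by
        rw [hg]; simp
      simp at this
    · exfalso
      have : (Symbol.nonterminal 1 : Symbol T (Fin 3)) ∈ List.map .terminal u := by
        rw [hg]; simp
      simp at this
    · exfalso
      have : (Symbol.nonterminal 2 : Symbol T (Fin 3)) ∈ List.map .terminal u := by
        rw [hg]; simp
      simp at this
    · refine ⟨k, Or.inl ?_⟩
      apply List.map_injective_iff.mpr hinj
      rw [hg, hmapA]
    · refine ⟨k, Or.inr ?_⟩
      apply List.map_injective_iff.mpr hinj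
      rw [hg, hmapA]
  · rintro ⟨k, hu | hu⟩
    · have h01 : (conjGrammar a b W).Produces ([Symbol.nonterminal 0] : List (Symbol T (Fin 3))) ([Symbol.nonterminal 1] : List (Symbol T (Fin 3))) :=
        ⟨(⟨0, [Symbol.nonterminal 1]⟩ : ContextFreeRule T (Fin 3)), by simp [conjGrammar], ContextFreeRule.Rewrites.input_output⟩
      have h1 := derives_repA a b W 1 a b (by simp [conjGrammar]) k
      have hW : (conjGrammar a b W).Produces
          (List.replicate k (Symbol.terminal a) ++ ([Symbol.nonterminal 1] : List (Symbol T (Fin 3)))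
            ++ List.replicate k (Symbol.terminal b))
          (List.replicate k (Symbol.terminal a) ++ W.map Symbol.terminal
            ++ List.replicate k (Symbol.terminal b)) :=
        ⟨(⟨1, W.map Symbol.terminal⟩ : ContextFreeRule T (Fin 3)), by simp [conjGrammar],
          ContextFreeRule.rewrites_of_exists_parts _ _ _⟩
      show (conjGrammar a b W).Derives _ _
      rw [hu, hmapA]
      exact (h01.trans_derives h1).trans_produces hW
    · have h02 : (conjGrammar a b W).Produces ([Symbol.nonterminal 0] : List (Symbol T (Fin 3))) ([Symbol.nonterminal 2] : List (Symbol T (Fin 3))) :=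
        ⟨(⟨0, [Symbol.nonterminal 2]⟩ : ContextFreeRule T (Fin 3)), by simp [conjGrammar], ContextFreeRule.Rewrites.input_output⟩
      have h2 := derives_repA a b W 2 b a (by simp [conjGrammar]) k
      have hW : (conjGrammar a b W).Produces
          (List.replicate k (Symbol.terminal b) ++ ([Symbol.nonterminal 2] : List (Symbol T (Fin 3)))
            ++ List.replicate k (Symbol.terminal a))
          (List.replicate k (Symbol.terminal b) ++ W.map Symbol.terminal
            ++ List.replicate k (Symbol.terminal a)) :=
        ⟨(⟨2, W.map Symbol.terminal⟩ : ContextFreeRule T (Fin 3)), by simp [conjGrammar],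
          ContextFreeRule.rewrites_of_exists_parts _ _ _⟩
      show (conjGrammar a b W).Derives _ _
      rw [hu, hmapA]
      exact (h02.trans_derives h2).trans_produces hW

lemma isCF_conj :
    Language.IsContextFree
      {u : List T | ∃ k : ℕ,
        u = List.replicate k a ++ W ++ List.replicate k b ∨
        u = List.replicate k b ++ W ++ List.replicate k a} :=
  ⟨conjGrammar a b W, lang_conjGrammar a b W⟩

end OrbitCF

open OrbitCF in
lemma exists_word {X G : Type} [Group G] (f : X → G)
    (hgen : Subgroup.closure (Set.range f) = ⊤) (g : G) :
    ∃ w : List (X ⊕ X), wordHom f (FreeMonoid.ofList w) = g := by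
  have hg : g ∈ Submonoid.closure (Set.range (Sum.elim f fun x => (f x)⁻¹)) := by
    have h1 : g ∈ (Subgroup.closure (Set.range f)).toSubmonoid := by
      rw [hgen]; trivial
    rw [Subgroup.closure_toSubmonoid] at h1
    have hsets : Set.range f ∪ (Set.range f)⁻¹ = Set.range (Sum.elim f fun x => (f x)⁻¹) := by
      rw [Set.Sum.elim_range]
      congr 1
      ext y
      simp only [Set.mem_inv, Set.mem_range]
      constructor
      · rintro ⟨x, hx⟩
        exact ⟨x, by rw [hx, inv_inv]⟩
      · rintro ⟨x, hx⟩
        exact ⟨x, by rw [← hx, inv_inv]⟩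
    rwa [hsets] at h1
  induction hg using Submonoid.closure_induction with
  | mem y hy =>
    obtain ⟨x, rfl⟩ := hy
    exact ⟨[x], by simp [wordHom, FreeMonoid.lift_ofList]⟩
  | one => exact ⟨[], by simp [wordHom]⟩
  | mul x y hxm hym hx hy =>
    obtain ⟨w1, h1⟩ := hx
    obtain ⟨w2, h2⟩ := hy
    exact ⟨w1 ++ w2, by rw [FreeMonoid.ofList_append, map_mul, h1, h2]⟩


/-- Let `G` be a group generated by a finite set (given by `f : X → G`), `g ∈ G` and
`φ` an automorphism of `G`. In the semidirect product `G ⋊_φ ℤ` (where `n ∈ ℤ` acts on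
`G` by `φⁿ`, the integers being written multiplicatively as `Multiplicative ℤ`), the
orbit `{φⁿ(g) : n ∈ ℤ}` of `g` under the iteration of `φ`, viewed inside `G ⋊_φ ℤ` via
the canonical embedding of `G`, is an algebraic subset of `G ⋊_φ ℤ` with respect to the
finite generating set consisting of the images of the generators of `G` together with
the element `t = (1, 1)`. -/
theorem orbit_isAlgebraic_semidirect {X G : Type} [Fintype X] [Group G] (f : X → G)
    (hgen : Subgroup.closure (Set.range f) = ⊤)
    (g : G) (φ : MulAut G) :
    IsAlgebraicSubset
      (Sum.elim
        (fun y : X =>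
          (SemidirectProduct.inl (f y) : G ⋊[zpowersHom (MulAut G) φ] Multiplicative ℤ))
        (fun _ : Unit =>
          (SemidirectProduct.inr (Multiplicative.ofAdd (1 : ℤ)) :
            G ⋊[zpowersHom (MulAut G) φ] Multiplicative ℤ)))
      (SemidirectProduct.inl '' (Set.range fun n : ℤ => (φ ^ n) g)) := by
  unfold IsAlgebraicSubset
  classical
  obtain ⟨w₀, hw₀⟩ := exists_word f hgen g
  set H := G ⋊[zpowersHom (MulAut G) φ] Multiplicative ℤ with hH
  set Fb : (X ⊕ Unit) → H :=
    Sum.elim (fun y : X => (SemidirectProduct.inl (f y) : H))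
      (fun _ : Unit => (SemidirectProduct.inr (Multiplicative.ofAdd (1 : ℤ)) : H)) with hFb
  set a : (X ⊕ Unit) ⊕ (X ⊕ Unit) := Sum.inl (Sum.inr ()) with ha
  set b : (X ⊕ Unit) ⊕ (X ⊕ Unit) := Sum.inr (Sum.inr ()) with hb
  set ι : X ⊕ X → (X ⊕ Unit) ⊕ (X ⊕ Unit) := Sum.map Sum.inl Sum.inl with hι
  set W : List ((X ⊕ Unit) ⊕ (X ⊕ Unit)) := w₀.map ι with hW
  refine ⟨{u | ∃ k : ℕ,
      u = List.replicate k a ++ W ++ List.replicate k b ∨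
      u = List.replicate k b ++ W ++ List.replicate k a}, OrbitCF.isCF_conj a b W, ?_⟩
  -- evaluation facts
  have hWval : wordHom Fb (FreeMonoid.ofList W) = SemidirectProduct.inl g := by
    simp only [wordHom, FreeMonoid.lift_ofList, hW, List.map_map]
    have hcomp : (Sum.elim Fb fun y => (Fb y)⁻¹) ∘ ι =
        (SemidirectProduct.inl : G →* H) ∘ (Sum.elim f fun x => (f x)⁻¹) := by
      funext x
      cases x with
      | inl x => simp [hι, hFb]
      | inr x => simp [hι, hFb]
    rw [hcomp, ← List.map_map, ← map_list_prod (SemidirectProduct.inl : G →* H)]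
    congr 1
    simpa [wordHom, FreeMonoid.lift_ofList] using hw₀
  have haval : ∀ k : ℕ, wordHom Fb (FreeMonoid.ofList (List.replicate k a)) =
      SemidirectProduct.inr (Multiplicative.ofAdd (k : ℤ)) := by
    intro k
    simp only [wordHom, FreeMonoid.lift_ofList, List.map_replicate, List.prod_replicate]
    rw [ha]
    simp only [Sum.elim_inl, hFb, Sum.elim_inr]
    rw [← map_pow]
    congr 1
    rw [← ofAdd_nsmul]
    simp
  have hbval : ∀ k : ℕ, wordHom Fb (FreeMonoid.ofList (List.replicate k b)) =
      SemidirectProduct.inr (Multiplicative.ofAdd (-(k : ℤ))) := by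
    intro k
    simp only [wordHom, FreeMonoid.lift_ofList, List.map_replicate, List.prod_replicate]
    rw [hb]
    simp only [Sum.elim_inr, hFb]
    rw [inv_pow, ← map_pow, ← map_inv]
    congr 1
    rw [← ofAdd_nsmul]
    simp [← ofAdd_neg]
  have hconj : ∀ m : ℤ, SemidirectProduct.inr (Multiplicative.ofAdd m) *
      SemidirectProduct.inl g * SemidirectProduct.inr (Multiplicative.ofAdd (-m)) =
      (SemidirectProduct.inl ((φ ^ m) g) : H) := by
    intro m
    rw [ofAdd_neg, ← SemidirectProduct.inl_aut (φ := zpowersHom (MulAut G) φ)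
      (Multiplicative.ofAdd m) g]
    rfl
  have keyA : ∀ k : ℕ, wordHom Fb (FreeMonoid.ofList
      (List.replicate k a ++ W ++ List.replicate k b)) =
      SemidirectProduct.inl ((φ ^ (k : ℤ)) g) := by
    intro k
    rw [FreeMonoid.ofList_append, FreeMonoid.ofList_append, map_mul, map_mul,
      hWval, haval, hbval, hconj]
  have keyB : ∀ k : ℕ, wordHom Fb (FreeMonoid.ofList
      (List.replicate k b ++ W ++ List.replicate k a)) =
      SemidirectProduct.inl ((φ ^ (-(k : ℤ))) g) := by
    intro k
    rw [FreeMonoid.ofList_append, FreeMonoid.ofList_append, map_mul, map_mul,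
      hWval, haval, hbval]
    have := hconj (-(k : ℤ))
    rwa [neg_neg] at this
  ext h
  simp only [Set.mem_image, Set.mem_setOf_eq, Set.mem_range]
  constructor
  · rintro ⟨u, ⟨k, hu | hu⟩, rfl⟩
    · exact ⟨(φ ^ (k : ℤ)) g, ⟨(k : ℤ), rfl⟩, by rw [hu]; exact (keyA k).symm⟩
    · exact ⟨(φ ^ (-(k : ℤ))) g, ⟨(-(k : ℤ)), rfl⟩, by rw [hu]; exact (keyB k).symm⟩
  · rintro ⟨x, ⟨n, rfl⟩, rfl⟩
    rcases le_or_gt 0 n with hn | hn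
    · refine ⟨List.replicate n.toNat a ++ W ++ List.replicate n.toNat b,
        ⟨n.toNat, Or.inl rfl⟩, ?_⟩
      rw [keyA, Int.toNat_of_nonneg hn]
    · refine ⟨List.replicate (-n).toNat b ++ W ++ List.replicate (-n).toNat a,
        ⟨(-n).toNat, Or.inr rfl⟩, ?_⟩
      rw [keyB, Int.toNat_of_nonneg (by omega), neg_neg]
end

section
/- Let m ≥ 1, let M be an m × m integer matrix with nonzero determinant, regarded as an injective endomorphism of ℤᵐ, let G = ℤᵐ ∗_M be the corresponding ascending HNN-extension with stable letter t and canonical embedding of : ℤᵐ → G, and let u ∈ ℤᵐ. Then the subgroup S = ⟨{t⁻ᵏ · of(u) · tᵏ : k ∈ ℤ}⟩ is an algebraic subset of G, where G is generated by the finite set consisting of the images of the standard basis vectors of ℤᵐ together with t. -/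
/-- The endomorphism of the free-abelian group `ℤᵐ` (written multiplicatively as
`Multiplicative (Fin m → ℤ)`) induced by an `m × m` integer matrix `M`, `u ↦ u M`. -/
def matHom {m : ℕ} (M : Matrix (Fin m) (Fin m) ℤ) :
    Multiplicative (Fin m → ℤ) →* Multiplicative (Fin m → ℤ) :=
  AddMonoidHom.toMultiplicative (Matrix.vecMulLinear M).toAddMonoidHom



open Pointwise

namespace AlgAux

variable {A G : Type} [Group G]

/-- Interpretation of grammar symbols as subsets of a group. -/
def symEval {N : Type} (ev : A → G) (μ : N → Set G) : Symbol A N → Set G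
  | .terminal a => {ev a}
  | .nonterminal n => μ n

theorem derives_eval_subset {g : ContextFreeGrammar A} (ev : A → G) (μ : g.NT → Set G)
    (hrules : ∀ r ∈ g.rules, ((r.output.map (symEval ev μ)).prod : Set G) ⊆ μ r.input)
    {v w : List (Symbol A g.NT)} (h : g.Derives v w) :
    ((w.map (symEval ev μ)).prod : Set G) ⊆ (v.map (symEval ev μ)).prod := by
  induction h with
  | refl => exact subset_rfl
  | tail _ hp ih =>
    refine subset_trans ?_ ih
    obtain ⟨r, hr, hrw⟩ := hp
    obtain ⟨p, q, rfl, rfl⟩ := hrw.exists_parts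
    simp only [List.map_append, List.prod_append, List.map_cons, List.map_nil,
      List.prod_cons, List.prod_nil, mul_one, symEval]
    exact Set.mul_subset_mul (Set.mul_subset_mul subset_rfl (hrules r hr)) subset_rfl

theorem prod_map_terminal {N : Type} (ev : A → G) (μ : N → Set G) (w : List A) :
    (((w.map (Symbol.terminal : A → Symbol A N)).map (symEval ev μ)).prod : Set G)
      = {(w.map ev).prod} := by
  induction w with
  | nil => rfl
  | cons a l ih =>
    simp only [List.map_cons, List.prod_cons, symEval, ih]
    exact Set.singleton_mul_singleton

end AlgAux

namespace AlgAux

abbrev Alph (m : ℕ) : Type := (Fin m ⊕ Unit) ⊕ (Fin m ⊕ Unit)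

def tPos (m : ℕ) : Alph m := Sum.inl (Sum.inr ())
def tNeg (m : ℕ) : Alph m := Sum.inr (Sum.inr ())

/-- One block of letters spelling `Pi.single i (v i)`. -/
def blk {m : ℕ} (v : Fin m → ℤ) (i : Fin m) : List (Alph m) :=
  if 0 ≤ v i then List.replicate (v i).toNat (Sum.inl (Sum.inl i))
  else List.replicate (-(v i)).toNat (Sum.inr (Sum.inl i))

/-- A word spelling the vector `v`. -/
def vecWord {m : ℕ} (v : Fin m → ℤ) : List (Alph m) :=
  (List.finRange m).flatMap (blk v)

section Eval

variable {m : ℕ} {G : Type} [Group G] (ψ : Multiplicative (Fin m → ℤ) →* G) (tG : G)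

/-- The generator evaluation map. -/
def fgen : (Fin m ⊕ Unit) → G :=
  Sum.elim (fun i : Fin m => ψ (Multiplicative.ofAdd (Pi.single i 1 : Fin m → ℤ)))
    (fun _ : Unit => tG)

def ev : Alph m → G := Sum.elim (fgen ψ tG) (fun x => (fgen ψ tG x)⁻¹)

theorem blk_eval (v : Fin m → ℤ) (i : Fin m) :
    ((blk v i).map (ev ψ tG)).prod = ψ (Multiplicative.ofAdd (Pi.single i (v i))) := by
  have key : ∀ z : ℤ, (ψ (Multiplicative.ofAdd (Pi.single i 1 : Fin m → ℤ))) ^ z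
      = ψ (Multiplicative.ofAdd (Pi.single i z)) := by
    intro z
    rw [← map_zpow, ← ofAdd_zsmul, ← Pi.single_smul, smul_eq_mul, mul_one]
  by_cases h : 0 ≤ v i
  · simp only [blk, if_pos h, List.map_replicate, List.prod_replicate, ev, fgen,
      Sum.elim_inl]
    rw [← zpow_natCast, Int.toNat_of_nonneg h, key]
  · simp only [blk, if_neg h, List.map_replicate, List.prod_replicate, ev, fgen,
      Sum.elim_inr, Sum.elim_inl, ← zpow_natCast,
      Int.toNat_of_nonneg (by omega : (0:ℤ) ≤ -(v i))]
    rw [inv_zpow, ← zpow_neg, neg_neg, key]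

theorem vecWord_eval (v : Fin m → ℤ) :
    ((vecWord v).map (ev ψ tG)).prod = ψ (Multiplicative.ofAdd v) := by
  have aux : ∀ l : List (Fin m),
      (((l.flatMap (blk v)).map (ev ψ tG)).prod : G)
        = ψ (Multiplicative.ofAdd ((l.map fun i => Pi.single i (v i)).sum)) := by
    intro l
    induction l with
    | nil => simp
    | cons a l ih =>
      simp only [List.flatMap_cons, List.map_append, List.prod_append, ih, blk_eval,
        List.map_cons, List.sum_cons, ofAdd_add, map_mul]
  rw [vecWord, aux]
  congr 1
  rw [← Fin.sum_univ_def]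
  exact congrArg Multiplicative.ofAdd (Finset.univ_sum_single v)

end Eval

end AlgAux

namespace AlgAux

instance {T N : Type} [DecidableEq T] [DecidableEq N] :
    DecidableEq (ContextFreeRule T N) := fun a b =>
  decidable_of_iff (a.input = b.input ∧ a.output = b.output)
    (ContextFreeRule.ext_iff).symm

variable {m : ℕ} (u : Fin m → ℤ)

def r1 (m : ℕ) : ContextFreeRule (Alph m) Bool := ⟨true, []⟩
def r2 (m : ℕ) : ContextFreeRule (Alph m) Bool :=
  ⟨true, [.nonterminal false, .nonterminal true]⟩
def r3 (m : ℕ) : ContextFreeRule (Alph m) Bool :=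
  ⟨false, [.terminal (tNeg m), .nonterminal false, .terminal (tPos m)]⟩
def r4 (m : ℕ) : ContextFreeRule (Alph m) Bool :=
  ⟨false, [.terminal (tPos m), .nonterminal false, .terminal (tNeg m)]⟩
def r5 {m : ℕ} (u : Fin m → ℤ) : ContextFreeRule (Alph m) Bool :=
  ⟨false, (vecWord u).map .terminal⟩
def r6 {m : ℕ} (u : Fin m → ℤ) : ContextFreeRule (Alph m) Bool :=
  ⟨false, (vecWord (-u)).map .terminal⟩

/-- The grammar witnessing algebraicity. -/
def gram (m : ℕ) (u : Fin m → ℤ) : ContextFreeGrammar (Alph m) where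
  NT := Bool
  initial := true
  rules := {r1 m, r2 m, r3 m, r4 m, r5 u, r6 u}

lemma mem1 : r1 m ∈ (gram m u).rules := Finset.mem_insert_self _ _
lemma mem2 : r2 m ∈ (gram m u).rules :=
  Finset.mem_insert_of_mem (Finset.mem_insert_self _ _)
lemma mem3 : r3 m ∈ (gram m u).rules :=
  Finset.mem_insert_of_mem (Finset.mem_insert_of_mem (Finset.mem_insert_self _ _))
lemma mem4 : r4 m ∈ (gram m u).rules :=
  Finset.mem_insert_of_mem (Finset.mem_insert_of_mem
    (Finset.mem_insert_of_mem (Finset.mem_insert_self _ _)))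
lemma mem5 : r5 u ∈ (gram m u).rules :=
  Finset.mem_insert_of_mem (Finset.mem_insert_of_mem (Finset.mem_insert_of_mem
    (Finset.mem_insert_of_mem (Finset.mem_insert_self _ _))))
lemma mem6 : r6 u ∈ (gram m u).rules :=
  Finset.mem_insert_of_mem (Finset.mem_insert_of_mem (Finset.mem_insert_of_mem
    (Finset.mem_insert_of_mem (Finset.mem_insert_of_mem (Finset.mem_singleton_self _)))))

section Derivations

variable {G : Type} [Group G] (ψ : Multiplicative (Fin m → ℤ) →* G) (tG : G)

theorem derives_false (v : Fin m → ℤ) (hv : v = u ∨ v = -u) (k : ℤ) :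
    ∃ w : List (Alph m),
      (gram m u).Derives [Symbol.nonterminal false] (w.map Symbol.terminal) ∧
      ((w.map (ev ψ tG)).prod : G)
        = tG ^ (-k) * ψ (Multiplicative.ofAdd v) * tG ^ k := by
  induction k using Int.induction_on with
  | zero =>
    refine ⟨vecWord v, ?_, by simp [vecWord_eval]⟩
    rcases hv with h | h
    · rw [h]
      exact ContextFreeGrammar.Produces.single
        ⟨r5 u, mem5 u, ContextFreeRule.Rewrites.input_output⟩
    · rw [h]
      exact ContextFreeGrammar.Produces.single
        ⟨r6 u, mem6 u, ContextFreeRule.Rewrites.input_output⟩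
  | succ i ih =>
    obtain ⟨w, hd, hval⟩ := ih
    refine ⟨tNeg m :: (w ++ [tPos m]), ?_, ?_⟩
    · have h1 : (gram m u).Produces [Symbol.nonterminal false]
          [.terminal (tNeg m), .nonterminal false, .terminal (tPos m)] :=
        ⟨r3 m, mem3 u, ContextFreeRule.Rewrites.input_output⟩
      have h2 := (hd.append_right [Symbol.terminal (tPos m)]).append_left
        [Symbol.terminal (tNeg m)]
      refine h1.trans_derives ?_
      simpa using h2
    · simp only [List.map_cons, List.map_append, List.prod_cons, List.prod_append,
        List.map_nil, List.prod_nil, hval]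
      have hneg : ev ψ tG (tNeg m) = tG⁻¹ := rfl
      have hpos : ev ψ tG (tPos m) = tG := rfl
      rw [hneg, hpos]
      group
  | pred i ih =>
    obtain ⟨w, hd, hval⟩ := ih
    refine ⟨tPos m :: (w ++ [tNeg m]), ?_, ?_⟩
    · have h1 : (gram m u).Produces [Symbol.nonterminal false]
          [.terminal (tPos m), .nonterminal false, .terminal (tNeg m)] :=
        ⟨r4 m, mem4 u, ContextFreeRule.Rewrites.input_output⟩
      have h2 := (hd.append_right [Symbol.terminal (tNeg m)]).append_left
        [Symbol.terminal (tPos m)]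
      refine h1.trans_derives ?_
      simpa using h2
    · simp only [List.map_cons, List.map_append, List.prod_cons, List.prod_append,
        List.map_nil, List.prod_nil, hval]
      have hneg : ev ψ tG (tNeg m) = tG⁻¹ := rfl
      have hpos : ev ψ tG (tPos m) = tG := rfl
      rw [hneg, hpos]
      group

theorem derives_true (l : List G)
    (hl : ∀ y ∈ l, ∃ k : ℤ, ∃ v : Fin m → ℤ, (v = u ∨ v = -u) ∧
      y = tG ^ (-k) * ψ (Multiplicative.ofAdd v) * tG ^ k) :
    ∃ w : List (Alph m),
      (gram m u).Derives [Symbol.nonterminal true] (w.map Symbol.terminal) ∧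
      ((w.map (ev ψ tG)).prod : G) = l.prod := by
  induction l with
  | nil =>
    exact ⟨[], ContextFreeGrammar.Produces.single
      ⟨r1 m, mem1 u, ContextFreeRule.Rewrites.input_output⟩, by simp⟩
  | cons y l ih =>
    obtain ⟨k, v, hv, rfl⟩ := hl y List.mem_cons_self
    obtain ⟨w2, hd2, hval2⟩ := ih fun z hz => hl z (List.mem_cons_of_mem _ hz)
    obtain ⟨w1, hd1, hval1⟩ := derives_false u ψ tG v hv k
    refine ⟨w1 ++ w2, ?_, by simp [List.prod_append, hval1, hval2]⟩
    have h1 : (gram m u).Produces [Symbol.nonterminal true]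
        [.nonterminal false, .nonterminal true] :=
      ⟨r2 m, mem2 u, ContextFreeRule.Rewrites.input_output⟩
    have h2 := hd1.append_right [Symbol.nonterminal true]
    have h3 := hd2.append_left (w1.map Symbol.terminal)
    refine h1.trans_derives ?_
    rw [List.map_append]
    exact ContextFreeGrammar.Derives.trans (by simpa using h2) h3

end Derivations

end AlgAux

namespace AlgAux

section Main

variable {m : ℕ} (u : Fin m → ℤ) {G : Type} [Group G]
  (ψ : Multiplicative (Fin m → ℤ) →* G) (tG : G)

def Rset : Set G := Set.range fun k : ℤ => tG ^ (-k) * ψ (Multiplicative.ofAdd u) * tG ^ k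

def Cset : Set G := {x | ∃ k : ℤ, ∃ v : Fin m → ℤ, (v = u ∨ v = -u) ∧
  x = tG ^ (-k) * ψ (Multiplicative.ofAdd v) * tG ^ k}

lemma neg_conj (k : ℤ) : tG ^ (-k) * ψ (Multiplicative.ofAdd (-u)) * tG ^ k
    = (tG ^ (-k) * ψ (Multiplicative.ofAdd u) * tG ^ k)⁻¹ := by
  rw [ofAdd_neg, map_inv]; group

lemma Cset_subset_closure :
    Cset u ψ tG ⊆ ↑(Subgroup.closure (Rset u ψ tG)) := by
  rintro x ⟨k, v, hv, rfl⟩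
  rcases hv with h | h
  · rw [h]; exact Subgroup.subset_closure ⟨k, rfl⟩
  · rw [h, neg_conj]
    exact inv_mem (Subgroup.subset_closure ⟨k, rfl⟩)

def mu : Bool → Set G
  | true => ↑(Subgroup.closure (Rset u ψ tG))
  | false => Cset u ψ tG

lemma rules_sound : ∀ r ∈ (gram m u).rules,
    ((r.output.map (symEval (ev ψ tG) (mu u ψ tG))).prod : Set G) ⊆ mu u ψ tG r.input := by
  intro r hr
  have hr' : r = r1 m ∨ r = r2 m ∨ r = r3 m ∨ r = r4 m ∨ r = r5 u ∨ r = r6 u := by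
    simp only [gram] at hr
    rcases Finset.mem_insert.1 hr with h | hr
    · exact Or.inl h
    rcases Finset.mem_insert.1 hr with h | hr
    · exact Or.inr (Or.inl h)
    rcases Finset.mem_insert.1 hr with h | hr
    · exact Or.inr (Or.inr (Or.inl h))
    rcases Finset.mem_insert.1 hr with h | hr
    · exact Or.inr (Or.inr (Or.inr (Or.inl h)))
    rcases Finset.mem_insert.1 hr with h | hr
    · exact Or.inr (Or.inr (Or.inr (Or.inr (Or.inl h))))
    exact Or.inr (Or.inr (Or.inr (Or.inr (Or.inr (Finset.mem_singleton.1 hr)))))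
  have hneg : ev ψ tG (tNeg m) = tG⁻¹ := rfl
  have hpos : ev ψ tG (tPos m) = tG := rfl
  rcases hr' with rfl | rfl | rfl | rfl | rfl | rfl
  · simp only [r1, List.map_nil, List.prod_nil, mu]
    exact Set.one_subset.2 (one_mem _)
  · simp only [r2, List.map_cons, List.map_nil, List.prod_cons, List.prod_nil, mul_one,
      symEval, mu]
    rw [Set.mul_subset_iff]
    intro x hx y hy
    exact mul_mem (Cset_subset_closure u ψ tG hx) hy
  · simp only [r3, List.map_cons, List.map_nil, List.prod_cons, List.prod_nil, mul_one,
      symEval, mu, hneg, hpos]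
    rw [Set.mul_subset_iff]
    rintro a rfl y hy
    rw [Set.mem_mul] at hy
    obtain ⟨c, hc, b, rfl, rfl⟩ := hy
    obtain ⟨k, v, hv, rfl⟩ := hc
    exact ⟨k + 1, v, hv, by group⟩
  · simp only [r4, List.map_cons, List.map_nil, List.prod_cons, List.prod_nil, mul_one,
      symEval, mu, hneg, hpos]
    rw [Set.mul_subset_iff]
    rintro a rfl y hy
    rw [Set.mem_mul] at hy
    obtain ⟨c, hc, b, rfl, rfl⟩ := hy
    obtain ⟨k, v, hv, rfl⟩ := hc
    exact ⟨k - 1, v, hv, by group⟩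
  · simp only [r5, prod_map_terminal, vecWord_eval, mu]
    exact Set.singleton_subset_iff.2 ⟨0, u, Or.inl rfl, by simp⟩
  · simp only [r6, prod_map_terminal, vecWord_eval, mu]
    exact Set.singleton_subset_iff.2 ⟨0, -u, Or.inr rfl, by simp⟩

theorem main_generic :
    IsAlgebraicSubset (fgen ψ tG)
      ((Subgroup.closure (Rset u ψ tG) : Subgroup G) : Set G) := by
  refine ⟨(gram m u).language, ⟨gram m u, rfl⟩, ?_⟩
  have hπ : ∀ w : List (Alph m),
      wordHom (fgen ψ tG) (FreeMonoid.ofList w) = ((w.map (ev ψ tG)).prod : G) := by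
    intro w
    rw [wordHom, FreeMonoid.lift_apply]
    rfl
  apply Set.Subset.antisymm
  · rintro x ⟨w, hw, rfl⟩
    have hw' : (gram m u).Derives [Symbol.nonterminal true] (w.map Symbol.terminal) := hw
    have hs := derives_eval_subset (ev ψ tG) (mu u ψ tG) (rules_sound u ψ tG) hw'
    simp only [prod_map_terminal, List.map_cons, List.map_nil, List.prod_cons,
      List.prod_nil, mul_one, symEval, mu] at hs
    simpa only [hπ] using hs (by erw [prod_map_terminal]; rfl)
  · intro x hx
    have hx' : x ∈ Submonoid.closure (Rset u ψ tG ∪ (Rset u ψ tG)⁻¹) := by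
      rw [← Subgroup.closure_toSubmonoid]
      exact hx
    obtain ⟨l, hl, rfl⟩ := Submonoid.exists_list_of_mem_closure hx'
    have hcond : ∀ y ∈ l, ∃ k : ℤ, ∃ v : Fin m → ℤ, (v = u ∨ v = -u) ∧
        y = tG ^ (-k) * ψ (Multiplicative.ofAdd v) * tG ^ k := by
      intro y hy
      rcases hl y hy with hy' | hy'
      · obtain ⟨k, rfl⟩ := hy'
        exact ⟨k, u, Or.inl rfl, rfl⟩
      · rw [Set.mem_inv] at hy'
        obtain ⟨k, hk⟩ := hy'
        refine ⟨k, -u, Or.inr rfl, ?_⟩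
        simp only at hk
        rw [neg_conj, hk, inv_inv]
    obtain ⟨w, hd, hval⟩ := derives_true u ψ tG l hcond
    exact ⟨w, hd, by simpa only [hπ] using hval⟩

end Main

end AlgAux

/-- Let `m ≥ 1`, let `M` be an `m × m` integer matrix with nonzero determinant, regarded
as an injective endomorphism of `ℤᵐ`, let `G = ℤᵐ ∗_M` and let `u ∈ ℤᵐ`. Then the
subgroup `S = ⟨{t⁻ᵏ of(u) tᵏ : k ∈ ℤ}⟩` is an algebraic subset of `G`, with respect to
the finite generating set consisting of the images of the standard basis vectors of `ℤᵐ`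
together with the stable letter `t`. -/
theorem closure_conjugates_isAlgebraic_ascendingHNN_freeAbelian (m : ℕ) (hm : 1 ≤ m)
    (M : Matrix (Fin m) (Fin m) ℤ) (hdet : M.det ≠ 0)
    (hinj : Function.Injective (matHom M))
    (u : Fin m → ℤ) :
    IsAlgebraicSubset
      (Sum.elim
        (fun i : Fin m =>
          (HNNExtension.of (Multiplicative.ofAdd (Pi.single i 1 : Fin m → ℤ)) :
            AscendingHNN (matHom M) hinj))
        (fun _ : Unit => (HNNExtension.t : AscendingHNN (matHom M) hinj)))
      ((Subgroup.closure (Set.range fun k : ℤ =>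
          (HNNExtension.t : AscendingHNN (matHom M) hinj) ^ (-k) *
            HNNExtension.of (Multiplicative.ofAdd u) * HNNExtension.t ^ k) :
        Subgroup (AscendingHNN (matHom M) hinj)) : Set (AscendingHNN (matHom M) hinj)) := by
  exact AlgAux.main_generic u HNNExtension.of HNNExtension.t
end
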